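/- arXiv:2002.08311 — 7 statements merged into one kernel-verified Lean document; each statement's English description precedes it below -/
import Mathlib

section
/- In a graph G given by a U-bubble model, any two vertices lying in the same quadrant B_{i,j}^{r,s} of the same bubble are true twins: they are adjacent and have exactly the same neighbors outside themselves. -/
/-- A U-bubble model for a graph G: each vertex has a row, a column, and a
quadrant type given by two booleans (qr v = left end closed, i.e. type (+,*);
qs v = right end closed, i.e. type (*,+)), such that adjacency in G is exactly
as prescribed by the U-bubble model definition. -/
def IsUBubbleModel {V : Type*} (G : SimpleGraph V) (row col : V → ℕ)
    (qr qs : V → Bool) : Prop :=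
  ∀ u v, G.Adj u v ↔ u ≠ v ∧
    (col u = col v ∨
     (col u + 1 = col v ∧ (row v < row u ∨ (row u = row v ∧ qs u = true ∧ qr v = true))) ∨
     (col v + 1 = col u ∧ (row u < row v ∨ (row v = row u ∧ qs v = true ∧ qr u = true))))

/-- Two distinct vertices lying in the same quadrant of the same bubble of a
U-bubble model are true twins: they are adjacent and have exactly the same
neighbours apart from each other. -/
theorem ubm_same_quadrant_true_twins {V : Type*} (G : SimpleGraph V)
    (row col : V → ℕ) (qr qs : V → Bool)
    (h : IsUBubbleModel G row col qr qs)
    (u v : V) (huv : u ≠ v)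
    (hrow : row u = row v) (hcol : col u = col v)
    (hqr : qr u = qr v) (hqs : qs u = qs v) :
    G.Adj u v ∧ ∀ w, w ≠ u → w ≠ v → (G.Adj u w ↔ G.Adj v w) := by
  constructor
  · exact (h u v).mpr ⟨huv, Or.inl hcol⟩
  · intro w hwu hwv
    rw [h u w, h v w]
    constructor
    · rintro ⟨_, hc⟩
      refine ⟨fun e => hwv e.symm, ?_⟩
      rw [← hrow, ← hcol, ← hqr, ← hqs]; exact hc
    · rintro ⟨_, hc⟩
      refine ⟨fun e => hwu e.symm, ?_⟩
      rw [hrow, hcol, hqr, hqs]; exact hc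
end

section
/- Every graph given by a U-bubble model is an intersection graph of unit-length real intervals of mixed types: concretely, if B has rows indexed 1..r and columns 1..k, setting ε = 1/r and assigning to each vertex v ∈ B_{i,j}^{(r',s')} the unit interval with left endpoint j + (i−1)ε, open/closed at each end according to the quadrant type (r',s'), yields an intersection representation isomorphic to G(B). -/
/-- The unit interval with left endpoint l, closed on the left iff a,
closed on the right iff b. -/
def uInt (l : ℝ) (a b : Bool) : Set ℝ :=
  {x | (if a then l ≤ x else l < x) ∧ (if b then x ≤ l + 1 else x < l + 1)}

lemma uInt_inter_nonempty (l l' : ℝ) (a b a' b' : Bool) :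
    (uInt l a b ∩ uInt l' a' b').Nonempty ↔
      (|l - l'| < 1 ∨ (l' = l + 1 ∧ b = true ∧ a' = true) ∨
        (l = l' + 1 ∧ b' = true ∧ a = true)) := by
  constructor
  · rintro ⟨x, hx1, hx2⟩
    simp only [uInt, Set.mem_setOf_eq] at hx1 hx2
    have hl : l ≤ x := by have := hx1.1; split_ifs at this; exacts [this, this.le]
    have hl1 : x ≤ l + 1 := by have := hx1.2; split_ifs at this; exacts [this, this.le]
    have hl' : l' ≤ x := by have := hx2.1; split_ifs at this; exacts [this, this.le]
    have hl1' : x ≤ l' + 1 := by have := hx2.2; split_ifs at this; exacts [this, this.le]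
    by_cases h1 : l' = l + 1
    · refine Or.inr (Or.inl ⟨h1, ?_, ?_⟩)
      · cases hb : b with
        | true => rfl
        | false => exfalso; have := hx1.2; rw [hb] at this; simp at this; linarith
      · cases ha : a' with
        | true => rfl
        | false => exfalso; have := hx2.1; rw [ha] at this; simp at this; linarith
    · by_cases h2 : l = l' + 1
      · refine Or.inr (Or.inr ⟨h2, ?_, ?_⟩)
        · cases hb : b' with
          | true => rfl
          | false => exfalso; have := hx2.2; rw [hb] at this; simp at this; linarith
        · cases ha : a with
          | true => rfl
          | false => exfalso; have := hx1.1; rw [ha] at this; simp at this; linarith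
      · left
        rw [abs_sub_lt_iff]
        constructor
        · rcases lt_or_eq_of_le (by linarith : l - l' ≤ 1) with h | h
          · exact h
          · exact absurd (by linarith) h2
        · rcases lt_or_eq_of_le (by linarith : l' - l ≤ 1) with h | h
          · exact h
          · exact absurd (by linarith) h1
  · rintro (habs | ⟨rfl, rfl, rfl⟩ | ⟨rfl, rfl, rfl⟩)
    · rw [abs_sub_lt_iff] at habs
      have key : max l l' < min l l' + 1 := by
        rcases le_total l l' with h | h
        · rw [max_eq_right h, min_eq_left h]; linarith [habs.2]
        · rw [max_eq_left h, min_eq_right h]; linarith [habs.1]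
      refine ⟨(max l l' + min l l' + 1) / 2, ⟨?_, ?_⟩, ⟨?_, ?_⟩⟩ <;> split_ifs <;>
        linarith [le_max_left l l', le_max_right l l', min_le_left l l',
          min_le_right l l', key]
    · exact ⟨l + 1, ⟨by split_ifs <;> linarith, by simp⟩, ⟨by simp, by split_ifs <;> linarith⟩⟩
    · exact ⟨l' + 1, ⟨by simp, by split_ifs <;> linarith⟩, ⟨by split_ifs <;> linarith, by simp⟩⟩


set_option maxHeartbeats 1600000 in
/-- Every graph given by a U-bubble model with rows indexed below r is an
intersection graph of mixed unit intervals: assigning to a vertex v the unit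
interval with left endpoint (col v) + (row v)·(1/r), with ends open/closed
according to the quadrant type of v, yields an intersection representation
isomorphic to the graph. -/
theorem ubm_to_mixed_unit_interval_representation {V : Type*} (G : SimpleGraph V)
    (row col : V → ℕ) (qr qs : V → Bool)
    (h : IsUBubbleModel G row col qr qs)
    (r : ℕ) (hr : 0 < r) (hrow : ∀ v, row v < r) :
    ∀ u v : V, u ≠ v →
      ((uInt ((col u : ℝ) + (row u : ℝ) * (1 / r)) (qr u) (qs u) ∩
        uInt ((col v : ℝ) + (row v : ℝ) * (1 / r)) (qr v) (qs v)).Nonempty ↔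
        G.Adj u v) := by
  intro u v huv
  rw [h u v, uInt_inter_nonempty]
  simp only [ne_eq, huv, not_false_iff, true_and]
  have hrR : (0 : ℝ) < r := by exact_mod_cast hr
  have hε : (0 : ℝ) < 1 / r := by positivity
  have frac : ∀ w : V, 0 ≤ (row w : ℝ) * (1 / r) ∧ (row w : ℝ) * (1 / r) < 1 := by
    intro w
    refine ⟨by positivity, ?_⟩
    have h1 : (row w : ℝ) < r := by exact_mod_cast hrow w
    rw [mul_one_div, div_lt_one hrR]; exact h1
  obtain ⟨hu0, hu1⟩ := frac u
  obtain ⟨hv0, hv1⟩ := frac v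
  rcases lt_trichotomy (col u) (col v) with hc | hc | hc
  · -- col u < col v
    rcases eq_or_lt_of_le (Nat.succ_le_of_lt hc) with hc1 | hc2
    · -- col u + 1 = col v
      have hc1' : col u + 1 = col v := by omega
      have hc1R : (col u : ℝ) + 1 = col v := by exact_mod_cast hc1'
      have hne : ¬ (col u = col v) := by omega
      have hne2 : ¬ (col v + 1 = col u) := by omega
      simp only [eq_true hc1', true_and, hne, hne2, false_and, false_or, or_false]
      rcases lt_trichotomy (row v) (row u) with hrw | hrw | hrw
      · have hrw1 : (row v : ℝ) + 1 ≤ row u := by exact_mod_cast hrw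
        have key : ((row v : ℝ) + 1) * (1 / r) ≤ (row u : ℝ) * (1 / r) :=
          mul_le_mul_of_nonneg_right hrw1 hε.le
        refine iff_of_true ?_ (Or.inl hrw)
        left; rw [abs_sub_lt_iff]; constructor <;> nlinarith [key]
      · -- equal rows
        have keyE : (row u : ℝ) * (1 / r) = (row v : ℝ) * (1 / r) := by
          rw [hrw]
        have hnlt : ¬ (row v < row u) := by omega
        simp only [hnlt, false_or]
        constructor
        · rintro (habs | ⟨_, hb, ha⟩ | ⟨heq, _, _⟩)
          · exfalso; rw [abs_sub_lt_iff] at habs; linarith [habs.2]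
          · exact ⟨hrw.symm, hb, ha⟩
          · exfalso; linarith
        · rintro ⟨_, hb, ha⟩
          exact Or.inr (Or.inl ⟨by linarith, hb, ha⟩)
      · -- row u < row v : no intersection, no adjacency
        have hrw1 : (row u : ℝ) + 1 ≤ row v := by exact_mod_cast hrw
        have key : ((row u : ℝ) + 1) * (1 / r) ≤ (row v : ℝ) * (1 / r) :=
          mul_le_mul_of_nonneg_right hrw1 hε.le
        have h1 : ¬ (row v < row u) := by omega
        have h2 : ¬ (row u = row v) := by omega
        simp only [h1, h2, false_and, false_or, or_false, iff_false]
        rintro (habs | ⟨heq, _, _⟩ | ⟨heq, _, _⟩)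
        · rw [abs_sub_lt_iff] at habs; nlinarith [habs.1, habs.2, key]
        · nlinarith [key]
        · nlinarith [key]
    · -- col u + 2 ≤ col v : nothing
      have hcR : (col u : ℝ) + 2 ≤ col v := by exact_mod_cast hc2
      have h1 : ¬ (col u = col v) := by omega
      have h2 : ¬ (col u + 1 = col v) := by omega
      have h3 : ¬ (col v + 1 = col u) := by omega
      simp only [h1, h2, h3, false_and, false_or, or_false, iff_false]
      rintro (habs | ⟨heq, _, _⟩ | ⟨heq, _, _⟩)
      · rw [abs_sub_lt_iff] at habs; linarith [habs.1, habs.2]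
      · linarith
      · linarith
  · -- equal columns
    have hcR : (col u : ℝ) = col v := by exact_mod_cast hc
    refine iff_of_true ?_ (Or.inl hc)
    left; rw [abs_sub_lt_iff]; constructor <;> linarith
  · -- col v < col u, symmetric
    rcases eq_or_lt_of_le (Nat.succ_le_of_lt hc) with hc1 | hc2
    · have hc1' : col v + 1 = col u := by omega
      have hc1R : (col v : ℝ) + 1 = col u := by exact_mod_cast hc1'
      have hne : ¬ (col u = col v) := by omega
      have hne2 : ¬ (col u + 1 = col v) := by omega
      simp only [eq_true hc1', true_and, hne, hne2, false_and, false_or, or_false]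
      rcases lt_trichotomy (row u) (row v) with hrw | hrw | hrw
      · have hrw1 : (row u : ℝ) + 1 ≤ row v := by exact_mod_cast hrw
        have key : ((row u : ℝ) + 1) * (1 / r) ≤ (row v : ℝ) * (1 / r) :=
          mul_le_mul_of_nonneg_right hrw1 hε.le
        refine iff_of_true ?_ (Or.inl hrw)
        left; rw [abs_sub_lt_iff]; constructor <;> nlinarith [key]
      · have keyE : (row u : ℝ) * (1 / r) = (row v : ℝ) * (1 / r) := by
          rw [hrw]
        have hnlt : ¬ (row u < row v) := by omega
        simp only [hnlt, false_or]
        constructor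
        · rintro (habs | ⟨heq, _, _⟩ | ⟨_, hb, ha⟩)
          · exfalso; rw [abs_sub_lt_iff] at habs; linarith [habs.1]
          · exfalso; linarith
          · exact ⟨hrw.symm, hb, ha⟩
        · rintro ⟨_, hb, ha⟩
          exact Or.inr (Or.inr ⟨by linarith, hb, ha⟩)
      · have hrw1 : (row v : ℝ) + 1 ≤ row u := by exact_mod_cast hrw
        have key : ((row v : ℝ) + 1) * (1 / r) ≤ (row u : ℝ) * (1 / r) :=
          mul_le_mul_of_nonneg_right hrw1 hε.le
        have h1 : ¬ (row u < row v) := by omega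
        have h2 : ¬ (row v = row u) := by omega
        simp only [h1, h2, false_and, false_or, or_false, iff_false]
        rintro (habs | ⟨heq, _, _⟩ | ⟨heq, _, _⟩)
        · rw [abs_sub_lt_iff] at habs; nlinarith [habs.1, habs.2, key]
        · nlinarith [key]
        · nlinarith [key]
    · have hcR : (col v : ℝ) + 2 ≤ col u := by exact_mod_cast hc2
      have h1 : ¬ (col u = col v) := by omega
      have h2 : ¬ (col u + 1 = col v) := by omega
      have h3 : ¬ (col v + 1 = col u) := by omega
      simp only [h1, h2, h3, false_and, false_or, or_false, iff_false]
      rintro (habs | ⟨heq, _, _⟩ | ⟨heq, _, _⟩)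
      · rw [abs_sub_lt_iff] at habs; linarith [habs.1, habs.2]
      · linarith
      · linarith
end

section
/- Let G be a graph given by a U-bubble model with columns C_j. For consecutive columns j, j+1 and a row index i, the set consisting of all vertices of column j in rows strictly below i, all vertices of column j+1 in rows strictly above i, together with the quadrants B_{i,j}^{*+} ∪ B_{i,j+1}^{+*} in row i, forms a clique of G. -/
/-- In a graph given by a U-bubble model, for consecutive columns j, j+1 and a
row i, the vertices of column j strictly below row i, the vertices of column
j+1 strictly above row i, together with the quadrants B_{i,j}^{*+} and
B_{i,j+1}^{+*} of row i, form a clique. -/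
theorem ubm_split_columns_isClique {V : Type*} (G : SimpleGraph V)
    (row col : V → ℕ) (qr qs : V → Bool)
    (h : IsUBubbleModel G row col qr qs) (i j : ℕ) :
    G.IsClique {v | (col v = j ∧ i < row v) ∨ (col v = j + 1 ∧ row v < i) ∨
      (col v = j ∧ row v = i ∧ qs v = true) ∨
      (col v = j + 1 ∧ row v = i ∧ qr v = true)} := by
  intro u hu v hv huv
  rw [h u v]
  refine ⟨huv, ?_⟩
  simp only [Set.mem_setOf_eq] at hu hv
  rcases hu with ⟨h1, h2⟩ | ⟨h1, h2⟩ | ⟨h1, h2, h3⟩ | ⟨h1, h2, h3⟩ <;>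
    rcases hv with ⟨g1, g2⟩ | ⟨g1, g2⟩ | ⟨g1, g2, g3⟩ | ⟨g1, g2, g3⟩ <;>
    simp_all <;> omega
end

section
/- Let G be a graph admitting a U-bubble model with k columns. Then the clique-width of G is at most k + 3. -/
/-- Clique-width expressions with labels in Fin k: vertex creation with a
label, disjoint union, relabelling i → j, and inserting all edges between
labels i and j for i ≠ j. -/
inductive CW (k : ℕ) : Type
  | vert : Fin k → CW k
  | union : CW k → CW k → CW k
  | relabel : Fin k → Fin k → CW k → CW k
  | join : (i j : Fin k) → i ≠ j → CW k → CW k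

structure LGraph (k : ℕ) : Type 1 where
  V : Type
  G : SimpleGraph V
  lab : V → Fin k

/-- The disjoint-sum relation of two relations. -/
def sumRel {α β : Type} (ra : α → α → Prop) (rb : β → β → Prop) :
    α ⊕ β → α ⊕ β → Prop
  | Sum.inl x, Sum.inl y => ra x y
  | Sum.inr x, Sum.inr y => rb x y
  | _, _ => False

def evalCW {k : ℕ} (e : CW k) : LGraph k :=
  match e with
  | .vert l => ⟨PUnit, ⊥, fun _ => l⟩
  | .union a b =>
      let A := evalCW a
      let B := evalCW b
      ⟨A.V ⊕ B.V, SimpleGraph.fromRel (sumRel A.G.Adj B.G.Adj), Sum.elim A.lab B.lab⟩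
  | .relabel i j a =>
      let A := evalCW a
      ⟨A.V, A.G, fun v => if A.lab v = i then j else A.lab v⟩
  | .join i j _ a =>
      let A := evalCW a
      ⟨A.V, A.G ⊔ SimpleGraph.fromRel (fun x y => A.lab x = i ∧ A.lab y = j), A.lab⟩

/-- G can be constructed by a clique-width expression with at most k labels. -/
def HasCliqueWidthLE {V : Type} (G : SimpleGraph V) (k : ℕ) : Prop :=
  ∃ e : CW k, Nonempty (G ≃g (evalCW e).G)

/-- The clique-width of a graph: the least number of labels needed to
construct it by a clique-width expression. -/
noncomputable def cliqueWidth {V : Type} (G : SimpleGraph V) : ℕ :=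
  sInf {k | HasCliqueWidthLE G k}

namespace UBMAux

/-! ### evalCW unfolding lemmas -/

lemma V_vert {k} (l : Fin k) : (evalCW (.vert l)).V = PUnit := rfl
lemma V_union {k} (a b : CW k) :
    (evalCW (.union a b)).V = ((evalCW a).V ⊕ (evalCW b).V) := rfl
lemma V_relabel {k} (i j : Fin k) (a : CW k) :
    (evalCW (.relabel i j a)).V = (evalCW a).V := rfl
lemma V_join {k} (i j : Fin k) (h : i ≠ j) (a : CW k) :
    (evalCW (.join i j h a)).V = (evalCW a).V := rfl

lemma G_vert {k} (l : Fin k) : (evalCW (.vert l)).G = ⊥ := rfl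
lemma G_relabel {k} (i j : Fin k) (a : CW k) :
    (evalCW (.relabel i j a)).G = (evalCW a).G := rfl
lemma lab_vert {k} (l : Fin k) (x : PUnit) : (evalCW (.vert l)).lab x = l := rfl
lemma lab_join {k} (i j : Fin k) (h : i ≠ j) (a : CW k)
    (x : (evalCW a).V) : (evalCW (.join i j h a)).lab x = (evalCW a).lab x := rfl
lemma lab_relabel {k} (i j : Fin k) (a : CW k) (x : (evalCW a).V) :
    (evalCW (.relabel i j a)).lab x =
      if (evalCW a).lab x = i then j else (evalCW a).lab x := rfl
lemma lab_union {k} (a b : CW k) (x : (evalCW a).V ⊕ (evalCW b).V) :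
    (evalCW (.union a b)).lab x = Sum.elim (evalCW a).lab (evalCW b).lab x := rfl

lemma adj_join {k} (i j : Fin k) (h : i ≠ j) (a : CW k)
    (x y : (evalCW a).V) :
    (evalCW (.join i j h a)).G.Adj x y ↔
      (evalCW a).G.Adj x y ∨ (x ≠ y ∧
        (((evalCW a).lab x = i ∧ (evalCW a).lab y = j) ∨
         ((evalCW a).lab y = i ∧ (evalCW a).lab x = j))) := by
  show ((evalCW a).G ⊔ SimpleGraph.fromRel _).Adj x y ↔ _
  rw [SimpleGraph.sup_adj, SimpleGraph.fromRel_adj]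

lemma adj_union {k} (a b : CW k) (x y : (evalCW a).V ⊕ (evalCW b).V) :
    (evalCW (.union a b)).G.Adj x y ↔
      (x ≠ y ∧ (sumRel (evalCW a).G.Adj (evalCW b).G.Adj x y ∨
        sumRel (evalCW a).G.Adj (evalCW b).G.Adj y x)) := by
  show (SimpleGraph.fromRel _).Adj x y ↔ _
  rw [SimpleGraph.fromRel_adj]

lemma eval_nonempty_finite {k : ℕ} (e : CW k) :
    Nonempty (evalCW e).V ∧ Finite (evalCW e).V := by
  induction e with
  | vert l => rw [V_vert]; exact ⟨⟨PUnit.unit⟩, inferInstance⟩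
  | union a b iha ihb =>
      obtain ⟨na, fa⟩ := iha
      obtain ⟨nb, fb⟩ := ihb
      rw [V_union]
      exact ⟨⟨Sum.inl na.some⟩, by have := fa; have := fb; infer_instance⟩
  | relabel i j a ih => rw [V_relabel]; exact ih
  | join i j hij a ih => rw [V_join]; exact ih

/-! ### The labelling scheme -/

variable {V : Type}

def lam (row col : V → ℕ) (qr : V → Bool) (k r j : ℕ) (u : V) : Fin (k + 3) :=
  if row u = r ∧ col u = j ∧ qr u = true then ⟨k + 2, by omega⟩
  else if row u = r ∧ col u = j + 1 ∧ qr u = true then ⟨k + 1, by omega⟩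
  else if h : col u < k then ⟨col u, by omega⟩ else ⟨k, by omega⟩

def upTo (row col : V → ℕ) (r j : ℕ) (u : V) : Prop :=
  r < row u ∨ (row u = r ∧ j ≤ col u)

variable (G : SimpleGraph V) (row col : V → ℕ) (qr qs : V → Bool) (k : ℕ)

def InvE (r j : ℕ) (S : Finset V) (e : CW (k + 3)) : Prop :=
  ∃ f : (evalCW e).V → V,
    Function.Injective f ∧ (∀ x, f x ∈ S) ∧ (∀ w ∈ S, ∃ x, f x = w) ∧
    (∀ x y, (evalCW e).G.Adj x y ↔ G.Adj (f x) (f y)) ∧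
    (∀ x, (evalCW e).lab x = lam row col qr k r j (f x))

def Inv (r j : ℕ) (S : Finset V) : Prop :=
  S = ∅ ∨ ∃ e, InvE G row col qr k r j S e

variable {G row col qr qs k}

lemma lam_ne_a {r j : ℕ} {u : V} (hcu : col u < k) :
    lam row col qr k r j u ≠ ⟨k, by omega⟩ := by
  unfold lam
  split_ifs <;> simp only [ne_eq, Fin.mk.injEq] <;> omega

lemma keyAdj (h : IsUBubbleModel G row col qr qs) {r j : ℕ} (hjk : j < k)
    {u v : V} (hcu : col u < k) (hu : upTo row col r j u) (huv : u ≠ v)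
    (hrv : row v = r) (hcv : col v = j) :
    G.Adj v u ↔ (lam row col qr k r j u = ⟨j, by omega⟩ ∨
      lam row col qr k r j u = ⟨k + 2, by omega⟩ ∨
      lam row col qr k r j u = ⟨j - 1, by omega⟩ ∨
      (qs v = true ∧ lam row col qr k r j u = ⟨k + 1, by omega⟩)) := by
  rw [h v u]
  unfold lam upTo at *
  have hne : ¬ v = u := fun e => huv e.symm
  rcases hq : qr u <;> rcases hq2 : qr v <;> rcases hs : qs v <;> rcases ht : qs u <;>
    simp only [hq, hq2, hs, ht, hne, Bool.false_eq_true, Bool.true_eq_false,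
      and_false, and_true, false_and, true_and, and_self, if_false, if_true,
      ite_false, ite_true, ne_eq, not_false_iff] <;>
    split_ifs <;>
    simp only [Fin.mk.injEq, false_and, and_false, and_true, or_false, false_or,
      true_and, true_or, or_true, iff_true, iff_false, not_or, not_and, not_lt] <;>
    omega

lemma lam_self {r j : ℕ} (hjk : j < k) {v : V} (hrv : row v = r) (hcv : col v = j) :
    lam row col qr k r j v =
      if qr v = true then (⟨k + 2, by omega⟩ : Fin (k + 3)) else ⟨j, by omega⟩ := by
  unfold lam
  rcases hq : qr v <;>
    simp only [hq, hrv, hcv, Bool.false_eq_true, and_false, and_true, and_self,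
      if_false, if_true, ite_false, ite_true] <;>
    split_ifs <;>
    simp only [Fin.mk.injEq] <;>
    omega

end UBMAux

namespace UBMAux2
open UBMAux

variable {V : Type} [DecidableEq V] {G : SimpleGraph V} {row col : V → ℕ}
  {qr qs : V → Bool} {k : ℕ}

lemma shape_with {A N ax ay xj yj xc yc xm ym xb yb q : Prop} (hq : q) :
    ((((A ∨ (N ∧ ((ax ∧ yj) ∨ (ay ∧ xj)))) ∨ (N ∧ ((ax ∧ yc) ∨ (ay ∧ xc)))) ∨
      (N ∧ ((ax ∧ ym) ∨ (ay ∧ xm)))) ∨ (N ∧ ((ax ∧ yb) ∨ (ay ∧ xb)))) ↔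
    (A ∨ (N ∧ ((ax ∧ (yj ∨ yc ∨ ym ∨ (q ∧ yb))) ∨
               (ay ∧ (xj ∨ xc ∨ xm ∨ (q ∧ xb)))))) := by
  tauto

lemma shape_without {A N ax ay xj yj xc yc xm ym xb yb q : Prop} (hq : ¬q) :
    (((A ∨ (N ∧ ((ax ∧ yj) ∨ (ay ∧ xj)))) ∨ (N ∧ ((ax ∧ yc) ∨ (ay ∧ xc)))) ∨
      (N ∧ ((ax ∧ ym) ∨ (ay ∧ xm)))) ↔
    (A ∨ (N ∧ ((ax ∧ (yj ∨ yc ∨ ym ∨ (q ∧ yb))) ∨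
               (ay ∧ (xj ∨ xc ∨ xm ∨ (q ∧ xb)))))) := by
  tauto

set_option maxHeartbeats 1000000 in
lemma core (h : IsUBubbleModel G row col qr qs) (hcol : ∀ w, col w < k)
    (r j : ℕ) (S : Finset V) (v : V)
    (hv : v ∉ S) (hrv : row v = r) (hcv : col v = j)
    (hS : ∀ u ∈ S, upTo row col r j u)
    (e₁ : CW (k + 3)) (f : (evalCW e₁).V → V) (x₀ : (evalCW e₁).V)
    (hf0 : f x₀ = v)
    (hinj : Function.Injective f)
    (hmem : ∀ x, f x ∈ insert v S)
    (hsurj : ∀ w ∈ insert v S, ∃ x, f x = w)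
    (hadj : ∀ x y, x ≠ x₀ → y ≠ x₀ →
      ((evalCW e₁).G.Adj x y ↔ G.Adj (f x) (f y)))
    (hnadj : ∀ y, ¬ (evalCW e₁).G.Adj x₀ y)
    (hlab0 : (evalCW e₁).lab x₀ = ⟨k, by omega⟩)
    (hlab : ∀ x, x ≠ x₀ → (evalCW e₁).lab x = lam row col qr k r j (f x)) :
    ∃ e, InvE G row col qr k r j (insert v S) e := by
  have hjk : j < k := hcv ▸ hcol v
  have haj : (⟨k, by omega⟩ : Fin (k + 3)) ≠ ⟨j, by omega⟩ := by
    simp only [ne_eq, Fin.mk.injEq]; omega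
  have hac : (⟨k, by omega⟩ : Fin (k + 3)) ≠ ⟨k + 2, by omega⟩ := by
    simp only [ne_eq, Fin.mk.injEq]; omega
  have hajm : (⟨k, by omega⟩ : Fin (k + 3)) ≠ ⟨j - 1, by omega⟩ := by
    simp only [ne_eq, Fin.mk.injEq]; omega
  have hab : (⟨k, by omega⟩ : Fin (k + 3)) ≠ ⟨k + 1, by omega⟩ := by
    simp only [ne_eq, Fin.mk.injEq]; omega
  have hfS : ∀ x, x ≠ x₀ → f x ∈ S := by
    intro x hx
    rcases Finset.mem_insert.1 (hmem x) with h' | h'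
    · exact absurd (hinj (h'.trans hf0.symm)) hx
    · exact h'
  have hlam_ne : ∀ x : (evalCW e₁).V,
      lam row col qr k r j (f x) ≠ ⟨k, by omega⟩ :=
    fun x => lam_ne_a (hcol (f x))
  have keyAdj' : ∀ x, x ≠ x₀ →
      (G.Adj v (f x) ↔ (lam row col qr k r j (f x) = ⟨j, by omega⟩ ∨
        lam row col qr k r j (f x) = ⟨k + 2, by omega⟩ ∨
        lam row col qr k r j (f x) = ⟨j - 1, by omega⟩ ∨
        (qs v = true ∧ lam row col qr k r j (f x) = ⟨k + 1, by omega⟩))) := by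
    intro x hx
    have hfx : f x ∈ S := hfS x hx
    exact keyAdj h hjk (hcol (f x)) (hS _ hfx) (show f x ≠ v from fun e => hv (e ▸ hfx)) hrv hcv
  -- the generic adjacency characterisation
  have hxor : ∀ x y : (evalCW e₁).V,
      ((evalCW e₁).G.Adj x y ∨ (x ≠ y ∧
        ((((evalCW e₁).lab x = ⟨k, by omega⟩ ∧ ((evalCW e₁).lab y = ⟨j, by omega⟩ ∨
            (evalCW e₁).lab y = ⟨k + 2, by omega⟩ ∨
            (evalCW e₁).lab y = ⟨j - 1, by omega⟩ ∨
            (qs v = true ∧ (evalCW e₁).lab y = ⟨k + 1, by omega⟩)))) ∨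
         (((evalCW e₁).lab y = ⟨k, by omega⟩ ∧ ((evalCW e₁).lab x = ⟨j, by omega⟩ ∨
            (evalCW e₁).lab x = ⟨k + 2, by omega⟩ ∨
            (evalCW e₁).lab x = ⟨j - 1, by omega⟩ ∨
            (qs v = true ∧ (evalCW e₁).lab x = ⟨k + 1, by omega⟩))))))) ↔
      G.Adj (f x) (f y) := by
    intro x y
    by_cases hx : x = x₀ <;> by_cases hy : y = x₀
    · rw [hx, hy, hf0]
      exact iff_of_false (by simp [hnadj x₀]) (G.irrefl)
    · have hyl : (evalCW e₁).lab y = lam row col qr k r j (f y) := hlab y hy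
      rw [hx, hf0, keyAdj' y hy]
      constructor
      · rintro (ha | ⟨hne, ⟨_, hc⟩ | ⟨hya, _⟩⟩)
        · exact absurd ha (hnadj y)
        · rwa [hyl] at hc
        · exact absurd (hyl ▸ hya) (hlam_ne y)
      · intro hc
        exact Or.inr ⟨fun e => hy e.symm, Or.inl ⟨hlab0, hyl ▸ hc⟩⟩
    · have hxl : (evalCW e₁).lab x = lam row col qr k r j (f x) := hlab x hx
      rw [hy, hf0, G.adj_comm, keyAdj' x hx]
      constructor
      · rintro (ha | ⟨hne, ⟨hxa, _⟩ | ⟨_, hc⟩⟩)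
        · exact absurd ((evalCW e₁).G.adj_symm ha) (hnadj x)
        · exact absurd (hxl ▸ hxa) (hlam_ne x)
        · rwa [hxl] at hc
      · intro hc
        exact Or.inr ⟨hx, Or.inr ⟨hlab0, hxl ▸ hc⟩⟩
    · have hxl : (evalCW e₁).lab x = lam row col qr k r j (f x) := hlab x hx
      have hyl : (evalCW e₁).lab y = lam row col qr k r j (f y) := hlab y hy
      rw [← hadj x y hx hy]
      constructor
      · rintro (ha | ⟨hne, ⟨hxa, _⟩ | ⟨hya, _⟩⟩)
        · exact ha
        · exact absurd (hxl ▸ hxa) (hlam_ne x)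
        · exact absurd (hyl ▸ hya) (hlam_ne y)
      · exact Or.inl
  have hlamv : lam row col qr k r j v =
      if qr v = true then (⟨k + 2, by omega⟩ : Fin (k + 3)) else ⟨j, by omega⟩ :=
    lam_self hjk hrv hcv
  by_cases hqs : qs v = true
  · refine ⟨.relabel ⟨k, by omega⟩ (if qr v = true then ⟨k + 2, by omega⟩ else ⟨j, by omega⟩)
      (.join _ _ hab (.join _ _ hajm (.join _ _ hac (.join _ _ haj e₁)))), ?_⟩
    unfold InvE
    simp only [V_relabel, V_join, G_relabel, adj_join, lab_join, lab_relabel]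
    refine ⟨f, hinj, hmem, hsurj, ?_, ?_⟩
    · intro x y
      rw [← hxor x y]
      exact shape_with hqs
    · intro x
      show (if (evalCW e₁).lab x = _ then _ else (evalCW e₁).lab x) = _
      by_cases hx : x = x₀
      · rw [hx, hlab0, if_pos rfl, hf0, hlamv]
      · rw [hlab x hx, if_neg (hlam_ne x)]
  · -- without the b-join
    refine ⟨.relabel ⟨k, by omega⟩ (if qr v = true then ⟨k + 2, by omega⟩ else ⟨j, by omega⟩)
      (.join _ _ hajm (.join _ _ hac (.join _ _ haj e₁))), ?_⟩
    unfold InvE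
    simp only [V_relabel, V_join, G_relabel, adj_join, lab_join, lab_relabel]
    refine ⟨f, hinj, hmem, hsurj, ?_, ?_⟩
    · intro x y
      rw [← hxor x y]
      exact shape_without hqs
    · intro x
      show (if (evalCW e₁).lab x = _ then _ else (evalCW e₁).lab x) = _
      by_cases hx : x = x₀
      · rw [hx, hlab0, if_pos rfl, hf0, hlamv]
      · rw [hlab x hx, if_neg (hlam_ne x)]


lemma addVertex (h : IsUBubbleModel G row col qr qs) (hcol : ∀ w, col w < k)
    {r j : ℕ} {S : Finset V} {v : V}
    (hv : v ∉ S) (hrv : row v = r) (hcv : col v = j)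
    (hS : ∀ u ∈ S, upTo row col r j u)
    (hInv : Inv G row col qr k r j S) :
    Inv G row col qr k r j (insert v S) := by
  rcases hInv with hS0 | ⟨e, f, hinj, hmem, hsurj, hadj, hlab⟩
  · subst hS0
    refine Or.inr (core h hcol r j ∅ v hv hrv hcv (by simp) (.vert ⟨k, by omega⟩)
      (fun _ => v) PUnit.unit rfl (fun a b _ => rfl)
      (fun _ => Finset.mem_insert_self v ∅) ?_ ?_ ?_ rfl ?_)
    · intro w hw
      refine ⟨PUnit.unit, ?_⟩
      have : w = v := by simpa using hw
      exact this.symm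
    · intro x y hx _
      exact absurd rfl hx
    · intro y hy
      exact hy.ne rfl
    · intro x hx
      exact absurd rfl hx
  · refine Or.inr (core h hcol r j S v hv hrv hcv hS
      (.union e (.vert ⟨k, by omega⟩)) (Sum.elim f fun _ => v)
      (Sum.inr PUnit.unit) rfl ?_ ?_ ?_ ?_ ?_ rfl ?_)
    · rintro (a | a) (b | b) hab
      · exact congrArg Sum.inl (hinj hab)
      · have h' : f a = v := hab
        exact absurd (h' ▸ hmem a) hv
      · have h' : f b = v := hab.symm
        exact absurd (h' ▸ hmem b) hv
      · rfl
    · rintro (a | a)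
      · exact Finset.mem_insert_of_mem (hmem a)
      · exact Finset.mem_insert_self v S
    · intro w hw
      rcases Finset.mem_insert.1 hw with rfl | hw'
      · exact ⟨Sum.inr PUnit.unit, rfl⟩
      · obtain ⟨x, hx⟩ := hsurj w hw'
        exact ⟨Sum.inl x, hx⟩
    · rintro (a | a) (b | b) hx hy
      · rw [adj_union]
        constructor
        · rintro ⟨hne, hh | hh⟩
          · exact (hadj a b).1 hh
          · exact ((hadj b a).1 hh).symm
        · intro hg
          have hne : a ≠ b := fun eab => hg.ne (by rw [eab])
          exact ⟨by simp [hne], Or.inl ((hadj a b).2 hg)⟩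
      · exact absurd rfl hy
      · exact absurd rfl hx
      · exact absurd rfl hx
    · rintro (b | b) hb
      · rw [adj_union] at hb
        rcases hb with ⟨_, hh | hh⟩ <;> exact hh.elim
      · rw [adj_union] at hb
        rcases hb with ⟨hne, hh | hh⟩ <;> exact hh.elim
    · rintro (a | a) hx
      · exact hlab a
      · exact absurd rfl hx

lemma lam_trans_col (hcol : ∀ w, col w < k) {r j : ℕ} (hjk : j + 1 < k) {u : V}
    (hu : upTo row col r (j + 1) u) :
    (if (if lam row col qr k r (j + 1) u = ⟨k + 1, by omega⟩
          then (⟨j + 2, by omega⟩ : Fin (k + 3))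
          else lam row col qr k r (j + 1) u) = ⟨k + 2, by omega⟩
      then (⟨k + 1, by omega⟩ : Fin (k + 3))
      else (if lam row col qr k r (j + 1) u = ⟨k + 1, by omega⟩
          then (⟨j + 2, by omega⟩ : Fin (k + 3))
          else lam row col qr k r (j + 1) u)) = lam row col qr k r j u := by
  have hcu := hcol u
  unfold lam upTo at *
  rcases hq : qr u <;>
    simp only [hq, Bool.false_eq_true, and_false, and_true, if_false, if_true,
      ite_false, ite_true, and_self] <;>
    split_ifs <;>
    simp only [Fin.mk.injEq, not_and, not_lt, not_true, not_false_iff] at * <;>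
    first
      | omega
      | (exact absurd trivial (by assumption))

lemma lam_trans_row (hcol : ∀ w, col w < k) {r : ℕ} {u : V}
    (hu : upTo row col (r + 1) 0 u) :
    (if (if lam row col qr k (r + 1) 0 u = ⟨k + 1, by omega⟩
          then (⟨1, by omega⟩ : Fin (k + 3))
          else lam row col qr k (r + 1) 0 u) = ⟨k + 2, by omega⟩
      then (⟨0, by omega⟩ : Fin (k + 3))
      else (if lam row col qr k (r + 1) 0 u = ⟨k + 1, by omega⟩
          then (⟨1, by omega⟩ : Fin (k + 3))
          else lam row col qr k (r + 1) 0 u)) = lam row col qr k r (k - 1) u := by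
  have hcu := hcol u
  unfold lam upTo at *
  rcases hq : qr u <;>
    simp only [hq, Bool.false_eq_true, and_false, and_true, if_false, if_true,
      ite_false, ite_true, and_self] <;>
    split_ifs <;>
    simp only [Fin.mk.injEq, not_and, not_lt, not_true, not_false_iff] at * <;>
    first
      | omega
      | (exact absurd trivial (by assumption))

lemma trans_col (hcol : ∀ w, col w < k) {r j : ℕ} (hjk : j + 1 < k)
    {S : Finset V} (hS : ∀ u ∈ S, upTo row col r (j + 1) u)
    (hI : Inv G row col qr k r (j + 1) S) : Inv G row col qr k r j S := by
  rcases hI with h0 | ⟨e, f, hinj, hmem, hsurj, hadj, hlab⟩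
  · exact Or.inl h0
  · refine Or.inr ⟨.relabel ⟨k + 2, by omega⟩ ⟨k + 1, by omega⟩
      (.relabel ⟨k + 1, by omega⟩ ⟨j + 2, by omega⟩ e), f, hinj, hmem, hsurj, ?_, ?_⟩
    · intro x y
      rw [G_relabel, G_relabel]
      exact hadj x y
    · intro x
      show (if (if (evalCW e).lab x = _ then _ else (evalCW e).lab x) = _ then _
        else (if (evalCW e).lab x = _ then _ else (evalCW e).lab x)) = _
      rw [hlab x]
      exact lam_trans_col hcol hjk (hS _ (hmem x))

lemma trans_row (hcol : ∀ w, col w < k) {r : ℕ}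
    {S : Finset V} (hS : ∀ u ∈ S, upTo row col (r + 1) 0 u)
    (hI : Inv G row col qr k (r + 1) 0 S) : Inv G row col qr k r (k - 1) S := by
  rcases hI with h0 | ⟨e, f, hinj, hmem, hsurj, hadj, hlab⟩
  · exact Or.inl h0
  · refine Or.inr ⟨.relabel ⟨k + 2, by omega⟩ ⟨0, by omega⟩
      (.relabel ⟨k + 1, by omega⟩ ⟨1, by omega⟩ e), f, hinj, hmem, hsurj, ?_, ?_⟩
    · intro x y
      rw [G_relabel, G_relabel]
      exact hadj x y
    · intro x
      show (if (if (evalCW e).lab x = _ then _ else (evalCW e).lab x) = _ then _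
        else (if (evalCW e).lab x = _ then _ else (evalCW e).lab x)) = _
      rw [hlab x]
      exact lam_trans_row hcol (hS _ (hmem x))

lemma cellLemma (h : IsUBubbleModel G row col qr qs) (hcol : ∀ w, col w < k)
    {r j : ℕ} (T : Finset V) (hT : ∀ u ∈ T, row u = r ∧ col u = j) :
    ∀ S : Finset V, (∀ u ∈ S, upTo row col r j u) → (∀ u ∈ T, u ∉ S) →
    Inv G row col qr k r j S → Inv G row col qr k r j (S ∪ T) := by
  induction T using Finset.induction_on with
  | empty => intro S _ _ hI; simpa using hI
  | @insert u T hu ih =>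
      intro S hS hTS hI
      have hur : row u = r := (hT u (Finset.mem_insert_self u T)).1
      have huc : col u = j := (hT u (Finset.mem_insert_self u T)).2
      have h1 : Inv G row col qr k r j (insert u S) :=
        addVertex h hcol (hTS u (Finset.mem_insert_self u T)) hur huc hS hI
      have h2 := ih (fun w hw => hT w (Finset.mem_insert_of_mem hw)) (insert u S)
        (fun w hw => by
          rcases Finset.mem_insert.1 hw with rfl | hw'
          · exact Or.inr ⟨hur, le_of_eq huc.symm⟩
          · exact hS w hw')
        (fun w hw hmem => by
          rcases Finset.mem_insert.1 hmem with rfl | hmem'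
          · exact hu hw
          · exact hTS w (Finset.mem_insert_of_mem hw) hmem')
        h1
      have he : insert u S ∪ T = S ∪ insert u T := by
        ext w
        simp only [Finset.mem_union, Finset.mem_insert]
        tauto
      rwa [he] at h2

def Aset (row col : V → ℕ) [Fintype V] (r j : ℕ) : Finset V :=
  Finset.univ.filter (fun u => r < row u ∨ (row u = r ∧ j < col u))

def Bset (row col : V → ℕ) [Fintype V] (r j : ℕ) : Finset V :=
  Finset.univ.filter (fun u => r < row u ∨ (row u = r ∧ j ≤ col u))

def cellF (row col : V → ℕ) [Fintype V] (r j : ℕ) : Finset V :=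
  Finset.univ.filter (fun u => row u = r ∧ col u = j)

lemma downCols [Fintype V] (h : IsUBubbleModel G row col qr qs)
    (hcol : ∀ w, col w < k) {r : ℕ} :
    ∀ j, j < k → Inv G row col qr k r j (Aset row col r j) →
      Inv G row col qr k r 0 (Bset row col r 0) := by
  intro j
  induction j with
  | zero =>
      intro _ hA
      have h1 := cellLemma h hcol (cellF row col r 0)
        (fun u hu => by simpa [cellF] using (Finset.mem_filter.1 hu).2)
        (Aset row col r 0)
        (fun u hu => by
          have := (Finset.mem_filter.1 hu).2
          unfold upTo
          omega)
        (fun u hu hmem => by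
          have h1 := (Finset.mem_filter.1 hu).2
          have h2 := (Finset.mem_filter.1 hmem).2
          omega)
        hA
      rwa [show Aset row col r 0 ∪ cellF row col r 0 = Bset row col r 0 by
        ext w
        simp only [Aset, cellF, Bset, Finset.mem_union, Finset.mem_filter,
          Finset.mem_univ, true_and]
        omega] at h1
  | succ j ih =>
      intro hjk hA
      have h1 := cellLemma h hcol (cellF row col r (j + 1))
        (fun u hu => by simpa [cellF] using (Finset.mem_filter.1 hu).2)
        (Aset row col r (j + 1))
        (fun u hu => by
          have := (Finset.mem_filter.1 hu).2
          unfold upTo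
          omega)
        (fun u hu hmem => by
          have h1 := (Finset.mem_filter.1 hu).2
          have h2 := (Finset.mem_filter.1 hmem).2
          omega)
        hA
      have hBA : Aset row col r (j + 1) ∪ cellF row col r (j + 1) =
          Bset row col r (j + 1) := by
        ext w
        simp only [Aset, cellF, Bset, Finset.mem_union, Finset.mem_filter,
          Finset.mem_univ, true_and]
        omega
      rw [hBA] at h1
      have h2 := trans_col hcol hjk
        (fun u hu => by
          have := (Finset.mem_filter.1 hu).2
          unfold upTo
          omega)
        h1
      have h3 : Bset row col r (j + 1) = Aset row col r j := by
        ext w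
        simp only [Aset, Bset, Finset.mem_filter, Finset.mem_univ, true_and]
        omega
      exact ih (by omega) (h3 ▸ h2)

lemma downRows [Fintype V] (h : IsUBubbleModel G row col qr qs)
    (hcol : ∀ w, col w < k) (hk : 0 < k) :
    ∀ r, Inv G row col qr k r (k - 1) (Aset row col r (k - 1)) →
      Inv G row col qr k 0 0 (Bset row col 0 0) := by
  intro r
  induction r with
  | zero =>
      intro hA
      exact downCols h hcol (k - 1) (by omega) hA
  | succ r ih =>
      intro hA
      have h1 := downCols h hcol (k - 1) (by omega) hA
      have h2 := trans_row hcol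
        (fun u hu => by
          have := (Finset.mem_filter.1 hu).2
          unfold upTo
          omega)
        h1
      have h3 : Bset row col (r + 1) 0 = Aset row col r (k - 1) := by
        ext w
        simp only [Aset, Bset, Finset.mem_filter, Finset.mem_univ, true_and]
        have := hcol w
        omega
      exact ih (h3 ▸ h2)

end UBMAux2

/-- If a graph admits a U-bubble model with k columns, then its clique-width
is at most k + 3. -/
theorem ubm_cliqueWidth_le_columns_add_three {V : Type} (G : SimpleGraph V)
    (row col : V → ℕ) (qr qs : V → Bool)
    (h : IsUBubbleModel G row col qr qs) (k : ℕ) (hcol : ∀ v, col v < k) :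
    cliqueWidth G ≤ k + 3 := by
  classical
  by_cases hfin : Finite V
  · by_cases hne : Nonempty V
    · have hk : 0 < k := lt_of_le_of_lt (Nat.zero_le _) (hcol hne.some)
      haveI : Fintype V := Fintype.ofFinite V
      set R := Finset.univ.sup row with hR
      have hinit : UBMAux.Inv G row col qr k R (k - 1)
          (UBMAux2.Aset row col R (k - 1)) := by
        left
        rw [Finset.eq_empty_iff_forall_notMem]
        intro u hu
        have h1 : row u ≤ R := Finset.le_sup (Finset.mem_univ u)
        have h2 := (Finset.mem_filter.1 hu).2
        have h3 := hcol u
        omega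
      have hfinal := UBMAux2.downRows h hcol hk R hinit
      have hB : UBMAux2.Bset row col 0 0 = Finset.univ := by
        ext w
        simp only [UBMAux2.Bset, Finset.mem_filter, Finset.mem_univ, true_and,
          iff_true]
        omega
      rw [hB] at hfinal
      rcases hfinal with h0 | ⟨e, f, hinj, hmem, hsurj, hadj, hlab⟩
      · exact absurd h0 (Finset.univ_nonempty).ne_empty
      · have hbij : Function.Bijective f := ⟨hinj, fun w => hsurj w (Finset.mem_univ w)⟩
        have hiso : G ≃g (evalCW e).G := by
          refine ⟨(Equiv.ofBijective f hbij).symm, ?_⟩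
          intro a b
          rw [hadj]
          rw [Equiv.ofBijective_apply_symm_apply f hbij,
            Equiv.ofBijective_apply_symm_apply f hbij]
        have hmemk : HasCliqueWidthLE G (k + 3) := ⟨e, ⟨hiso⟩⟩
        exact Nat.sInf_le hmemk
    · have hempty : {m | HasCliqueWidthLE G m} = ∅ := by
        ext m
        simp only [Set.mem_setOf_eq, Set.mem_empty_iff_false, iff_false]
        rintro ⟨e, ⟨iso⟩⟩
        obtain ⟨⟨x⟩, _⟩ := UBMAux.eval_nonempty_finite e
        exact hne ⟨iso.toEquiv.symm x⟩
      unfold cliqueWidth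
      rw [hempty, Nat.sInf_empty]
      omega
  · have hempty : {m | HasCliqueWidthLE G m} = ∅ := by
      ext m
      simp only [Set.mem_setOf_eq, Set.mem_empty_iff_false, iff_false]
      rintro ⟨e, ⟨iso⟩⟩
      obtain ⟨_, hf⟩ := UBMAux.eval_nonempty_finite e
      exact hfin (Finite.of_equiv _ iso.toEquiv.symm)
    unfold cliqueWidth
    rw [hempty, Nat.sInf_empty]
    omega
end

section
/- Let G be a graph admitting a U-bubble model. Then cwd(G) ≤ 2α(G) + 3, where α(G) is the independence number of G. -/
set_option maxHeartbeats 1600000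


/-- The independence number of a graph. -/
noncomputable def indepNum {V : Type*} (G : SimpleGraph V) : ℕ := Gᶜ.cliqueNum

section StepLemmas
variable {N : ℕ}

lemma relabel_G (i j : Fin N) (c : CW N) : (evalCW (.relabel i j c)).G = (evalCW c).G := rfl

lemma relabel_lab (i j : Fin N) (c : CW N) (x : (evalCW c).V) :
    (evalCW (.relabel i j c)).lab x
      = if (evalCW c).lab x = i then j else (evalCW c).lab x := rfl

lemma join_lab (i j : Fin N) (h : i ≠ j) (c : CW N) :
    (evalCW (.join i j h c)).lab = (evalCW c).lab := rfl

lemma union_lab (a b : CW N) :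
    (evalCW (.union a b)).lab = Sum.elim (evalCW a).lab (evalCW b).lab := rfl

lemma vert_lab (l : Fin N) : (evalCW (.vert l)).lab = fun _ => l := rfl

lemma join_adj (i j : Fin N) (h : i ≠ j) (c : CW N) (x y : (evalCW c).V) :
    (evalCW (.join i j h c)).G.Adj x y ↔ (evalCW c).G.Adj x y ∨
      (x ≠ y ∧ (((evalCW c).lab x = i ∧ (evalCW c).lab y = j) ∨
        ((evalCW c).lab y = i ∧ (evalCW c).lab x = j))) := by
  simp only [evalCW, SimpleGraph.sup_adj, SimpleGraph.fromRel_adj]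

lemma union_adj_ll (a b : CW N) (x y : (evalCW a).V) :
    (evalCW (.union a b)).G.Adj (Sum.inl x) (Sum.inl y) ↔ (evalCW a).G.Adj x y := by
  simp only [evalCW, SimpleGraph.fromRel_adj, sumRel, ne_eq, Sum.inl.injEq]
  constructor
  · rintro ⟨hne, h | h⟩
    · exact h
    · exact (evalCW a).G.adj_symm h
  · intro h
    exact ⟨fun hc => (evalCW a).G.ne_of_adj h hc, Or.inl h⟩

lemma union_adj_rr (a b : CW N) (x y : (evalCW b).V) :
    (evalCW (.union a b)).G.Adj (Sum.inr x) (Sum.inr y) ↔ (evalCW b).G.Adj x y := by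
  simp only [evalCW, SimpleGraph.fromRel_adj, sumRel, ne_eq, Sum.inr.injEq]
  constructor
  · rintro ⟨hne, h | h⟩
    · exact h
    · exact (evalCW b).G.adj_symm h
  · intro h
    exact ⟨fun hc => (evalCW b).G.ne_of_adj h hc, Or.inl h⟩

lemma union_adj_lr (a b : CW N) (x : (evalCW a).V) (y : (evalCW b).V) :
    (evalCW (.union a b)).G.Adj (Sum.inl x) (Sum.inr y) ↔ False := by
  simp [evalCW, SimpleGraph.fromRel_adj, sumRel]

lemma union_adj_rl (a b : CW N) (x : (evalCW b).V) (y : (evalCW a).V) :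
    (evalCW (.union a b)).G.Adj (Sum.inr x) (Sum.inl y) ↔ False := by
  simp [evalCW, SimpleGraph.fromRel_adj, sumRel]

lemma vert_adj (l : Fin N) (x y : PUnit) : (evalCW (.vert l)).G.Adj x y ↔ False := by
  simp [evalCW]

end StepLemmas

def BInv {V : Type} (G : SimpleGraph V) (N : ℕ) (done : List V) (f : V → Fin N) : Prop :=
  ∃ e : CW N, ∃ φ : (evalCW e).V ≃ {u // u ∈ done},
    (∀ x y, (evalCW e).G.Adj x y ↔ G.Adj (φ x).1 (φ y).1) ∧
    (∀ x, (evalCW e).lab x = f (φ x).1)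

lemma BInv_congr {V : Type} {G : SimpleGraph V} {N : ℕ} {done : List V} {f g : V → Fin N}
    (hI : BInv G N done f) (hfg : ∀ u ∈ done, f u = g u) : BInv G N done g := by
  obtain ⟨e, φ, hadj, hlab⟩ := hI
  exact ⟨e, φ, hadj, fun x => (hlab x).trans (hfg _ (φ x).2)⟩

lemma BInv_relabel {V : Type} {G : SimpleGraph V} {N : ℕ} {done : List V} {f : V → Fin N}
    (hI : BInv G N done f) (i j : Fin N) :
    BInv G N done (fun u => if f u = i then j else f u) := by
  obtain ⟨e, φ, hadj, hlab⟩ := hI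
  refine ⟨.relabel i j e, φ, hadj, fun x => ?_⟩
  exact congrArg (fun t => if t = i then j else t) (hlab x)

lemma BInv_single {V : Type} (G : SimpleGraph V) (N : ℕ) (v : V) (f : V → Fin N) :
    BInv G N [v] f := by
  refine ⟨.vert (f v),
    ⟨fun _ => ⟨v, by simp⟩, fun _ => PUnit.unit, fun x => by cases x; rfl,
     fun x => Subtype.ext (by have := x.2; simp at this; simp [this])⟩, ?_, ?_⟩
  · intro x y
    exact iff_of_false (vert_adj _ x y).1 (G.irrefl)
  · intro x; rfl

lemma BInv_add {V : Type} [DecidableEq V] {G : SimpleGraph V} {N : ℕ} {done : List V}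
    {f : V → Fin N} (hI : BInv G N done f) (v : V) (hv : v ∉ done)
    (A tgt j1 j2 j3 j4 : Fin N)
    (h1 : A ≠ j1) (h2 : A ≠ j2) (h3 : A ≠ j3) (h4 : A ≠ j4)
    (hfA : ∀ u ∈ done, f u ≠ A)
    (hJ : ∀ u ∈ done, G.Adj v u ↔ (f u = j1 ∨ f u = j2 ∨ f u = j3 ∨ f u = j4)) :
    BInv G N (done ++ [v]) (fun u => if u = v then tgt else f u) := by
  classical
  obtain ⟨e, φ, hadj, hlab⟩ := hI
  have hmem : ∀ x : (evalCW e).V, (φ x).1 ∈ done ++ [v] := fun x => by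
    simp [List.mem_append, (φ x).2]
  have hnev : ∀ x : (evalCW e).V, (φ x).1 ≠ v := fun x hc => hv (hc ▸ (φ x).2)
  refine ⟨.relabel A tgt (.join A j4 h4 (.join A j3 h3 (.join A j2 h2 (.join A j1 h1
      (.union (.vert A) e))))),
    ⟨Sum.elim (fun _ => ⟨v, by simp⟩) (fun x => ⟨(φ x).1, hmem x⟩),
     fun u => if h : u.1 = v then Sum.inl PUnit.unit else
       Sum.inr (φ.symm ⟨u.1, by
         have := u.2; rw [List.mem_append] at this
         rcases this with h' | h'
         · exact h'
         · simp at h'; exact absurd h' h⟩),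
     ?_, ?_⟩, ?_, ?_⟩
  · -- left inverse
    rintro (x | x)
    · dsimp only [Sum.elim_inl]
      exact (dif_pos rfl).trans rfl
    · dsimp only [Sum.elim_inr]
      exact (dif_neg (hnev x)).trans
        (congrArg Sum.inr (by simp only [Subtype.coe_eta, Equiv.symm_apply_apply]))
  · -- right inverse
    rintro ⟨u, hu⟩
    dsimp only
    by_cases h : u = v
    · subst h; exact (congrArg (Sum.elim _ _) (dif_pos rfl)).trans rfl
    · exact (congrArg (Sum.elim _ _) (dif_neg h)).trans
        (Subtype.ext (by
          show (φ (φ.symm _)).1 = u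
          exact congrArg Subtype.val (φ.apply_symm_apply _)))
  · -- adjacency
    intro x y
    erw [relabel_G, join_adj, join_adj, join_adj, join_adj]
    simp only [join_lab, union_lab, vert_lab]
    rcases x with x | x <;> rcases y with y | y
    · rw [union_adj_ll]
      erw [vert_adj]
      cases x; cases y
      refine iff_of_false ?_ (G.irrefl)
      rintro ((((h' | ⟨h', _⟩) | ⟨h', _⟩) | ⟨h', _⟩) | ⟨h', _⟩) <;>
        first | exact h'.elim | exact h' rfl
    · rw [union_adj_lr]
      simp only [Sum.elim_inl, Sum.elim_inr]
      have hy := (φ y).2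
      have hyA := hfA _ hy
      rw [hlab]
      have hne : (Sum.inl x : PUnit ⊕ (evalCW e).V) ≠ Sum.inr y := by simp
      constructor
      · rintro ((((h' | ⟨_, h'⟩) | ⟨_, h'⟩) | ⟨_, h'⟩) | ⟨_, h'⟩) <;>
          first
            | exact h'.elim
            | (refine (hJ _ hy).2 ?_; tauto)
      · intro hGA
        have := (hJ _ hy).1 hGA
        tauto
    · rw [union_adj_rl]
      simp only [Sum.elim_inl, Sum.elim_inr]
      have hx := (φ x).2
      have hxA := hfA _ hx
      rw [hlab]
      rw [G.adj_comm]
      have hne : (Sum.inr x : PUnit ⊕ (evalCW e).V) ≠ Sum.inl y := Sum.inr_ne_inl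
      constructor
      · rintro ((((h' | ⟨_, h'⟩) | ⟨_, h'⟩) | ⟨_, h'⟩) | ⟨_, h'⟩) <;>
          first
            | exact h'.elim
            | (refine (hJ _ hx).2 ?_; tauto)
      · intro hGA
        have := (hJ _ hx).1 hGA
        tauto
    · rw [union_adj_rr]
      simp only [Sum.elim_inr]
      have hxA := hfA _ (φ x).2
      have hyA := hfA _ (φ y).2
      rw [hlab, hlab]
      constructor
      · rintro ((((h' | ⟨_, h'⟩) | ⟨_, h'⟩) | ⟨_, h'⟩) | ⟨_, h'⟩) <;>
          first
            | exact (hadj x y).1 h'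
            | tauto
      · intro hGA
        exact Or.inl (Or.inl (Or.inl (Or.inl ((hadj x y).2 hGA))))
  · -- labels
    rintro (x | x)
    · erw [relabel_lab]
      simp only [join_lab, union_lab, vert_lab, Sum.elim_inl, if_pos rfl]
      simp
      exact fun hc => absurd rfl hc
    · erw [relabel_lab]
      simp only [join_lab, union_lab, vert_lab, Sum.elim_inr]
      have hxA := hfA _ (φ x).2
      have hl : (evalCW e).lab x ≠ A := fun hc => hxA ((hlab x).symm.trans hc)
      exact (if_neg hl).trans ((hlab x).trans (if_neg (hnev x)).symm)

set_option linter.unusedSectionVars false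
section Comb
variable {V : Type} [Fintype V] [DecidableEq V]

def cidx (col : V → ℕ) (v : V) : ℕ := ((Finset.univ.image col).filter (· < col v)).card

def colLab (a i : ℕ) : Fin (2*a+3) :=
  ⟨min i (2*a-1), lt_of_le_of_lt (Nat.min_le_right _ _) (by omega)⟩

def hLab (a m : ℕ) : Fin (2*a+3) := ⟨2*a + m % 2, by omega⟩

def aLab (a : ℕ) : Fin (2*a+3) := ⟨2*a+2, by omega⟩

lemma colLab_ne_hLab {a : ℕ} (ha : 1 ≤ a) (i m : ℕ) : colLab a i ≠ hLab a m := by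
  apply Fin.ne_of_val_ne
  have h1 := Nat.min_le_right i (2*a-1)
  simp only [colLab, hLab]
  omega

lemma colLab_ne_aLab {a : ℕ} (i : ℕ) : colLab a i ≠ aLab a := by
  apply Fin.ne_of_val_ne
  have h1 := Nat.min_le_right i (2*a-1)
  simp only [colLab, aLab]
  omega

lemma hLab_ne_aLab {a : ℕ} (m : ℕ) : hLab a m ≠ aLab a := by
  apply Fin.ne_of_val_ne
  have : m % 2 < 2 := Nat.mod_lt _ (by omega)
  simp only [hLab, aLab]
  omega

lemma colLab_inj {a i j : ℕ} (hi : i ≤ 2*a-1) (hj : j ≤ 2*a-1) :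
    colLab a i = colLab a j ↔ i = j := by
  rw [Fin.ext_iff]
  simp only [colLab]
  omega

lemma colLab_ne {a i j : ℕ} (hi : i ≤ 2*a-1) (hj : j ≤ 2*a-1) (hne : i ≠ j) :
    colLab a i ≠ colLab a j := fun hc => hne ((colLab_inj hi hj).1 hc)

lemma hLab_inj {a m m' : ℕ} : hLab a m = hLab a m' ↔ m % 2 = m' % 2 := by
  rw [Fin.ext_iff]
  simp only [hLab]
  omega

lemma hLab_ne {a m m' : ℕ} (h : m % 2 ≠ m' % 2) : hLab a m ≠ hLab a m' :=
  fun hc => h (hLab_inj.1 hc)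

variable (col : V → ℕ)

lemma cidx_lt_card (v : V) : cidx col v < (Finset.univ.image col).card := by
  apply Finset.card_lt_card
  rw [Finset.ssubset_iff_of_subset (Finset.filter_subset _ _)]
  exact ⟨col v, Finset.mem_image_of_mem col (Finset.mem_univ v), by simp⟩

lemma cidx_lt_cidx {u v : V} (h : col u < col v) : cidx col u < cidx col v := by
  have hsub : (Finset.univ.image col).filter (· < col u)
      ⊆ (Finset.univ.image col).filter (· < col v) := fun x hx => by
    simp only [Finset.mem_filter] at hx ⊢
    exact ⟨hx.1, by omega⟩
  refine Finset.card_lt_card ((Finset.ssubset_iff_of_subset hsub).2 ⟨col u, ?_, by simp⟩)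
  simp only [Finset.mem_filter]
  exact ⟨Finset.mem_image_of_mem col (Finset.mem_univ u), h⟩

lemma cidx_eq_cidx {u v : V} (h : col u = col v) : cidx col u = cidx col v := by
  simp [cidx, h]

lemma cidx_succ {u v : V} (h : col u + 1 = col v) : cidx col u + 1 = cidx col v := by
  have hins : (Finset.univ.image col).filter (· < col v)
      = insert (col u) ((Finset.univ.image col).filter (· < col u)) := by
    ext x
    simp only [Finset.mem_filter, Finset.mem_insert]
    constructor
    · rintro ⟨hx, hlt⟩
      rcases Nat.lt_or_ge x (col u) with h' | h'
      · exact Or.inr ⟨hx, h'⟩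
      · exact Or.inl (by omega)
    · rintro (rfl | ⟨hx, hlt⟩)
      · exact ⟨Finset.mem_image_of_mem col (Finset.mem_univ u), by omega⟩
      · exact ⟨hx, by omega⟩
  rw [cidx, cidx, hins, Finset.card_insert_of_notMem (by simp)]

lemma col_eq_of_cidx_eq {u v : V} (h : cidx col u = cidx col v) : col u = col v := by
  rcases lt_trichotomy (col u) (col v) with h' | h' | h'
  · exact absurd h (Nat.ne_of_lt (cidx_lt_cidx col h'))
  · exact h'
  · exact absurd h.symm (Nat.ne_of_lt (cidx_lt_cidx col h'))

end Comb


section Model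
variable {V : Type} [Fintype V] [DecidableEq V]

def lam (row col : V → ℕ) (qr : V → Bool) (a : ℕ) (w : Option V) (u : V) : Fin (2*a+3) :=
  match w with
  | none => colLab a (cidx col u)
  | some w => if row u = row w ∧ qr u = true ∧ cidx col u ≤ cidx col w + 1
      then hLab a (cidx col u) else colLab a (cidx col u)

def jtgt (row col : V → ℕ) (qr : V → Bool) (a : ℕ) (v : V) : Fin (2*a+3) :=
  if qr v then hLab a (cidx col v) else colLab a (cidx col v)

lemma lam_self (row col : V → ℕ) (qr : V → Bool) (a : ℕ) (v : V) :
    lam row col qr a (some v) v = jtgt row col qr a v := by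
  simp only [lam, jtgt]
  by_cases hq : qr v <;> simp [hq]

def jlab1 (col : V → ℕ) (a : ℕ) (v : V) : Fin (2*a+3) := colLab a (cidx col v)

def jlab2 (col : V → ℕ) (a : ℕ) (v : V) : Fin (2*a+3) := hLab a (cidx col v)

def jlab3 (col : V → ℕ) (a : ℕ) (v : V) : Fin (2*a+3) :=
  if 0 < col v ∧ ∃ w : V, col w = col v - 1 then colLab a (cidx col v - 1)
  else colLab a (cidx col v)

def jlab4 (col : V → ℕ) (qs : V → Bool) (a : ℕ) (v : V) : Fin (2*a+3) :=
  if qs v = true ∧ ∃ w : V, col w = col v + 1 then hLab a (cidx col v + 1)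
  else hLab a (cidx col v)

lemma lam_ne_aLab (row col : V → ℕ) (qr : V → Bool) {a : ℕ} (ha : 1 ≤ a) (w : Option V)
    (u : V) : lam row col qr a w u ≠ aLab a := by
  rcases w with _ | w
  · exact colLab_ne_aLab _
  · simp only [lam]
    split
    · exact hLab_ne_aLab _
    · exact colLab_ne_aLab _

lemma sound {G : SimpleGraph V} {row col : V → ℕ} {qr qs : V → Bool}
    (h : IsUBubbleModel G row col qr qs) {a : ℕ} (ha : 1 ≤ a)
    (hK : (Finset.univ.image col).card ≤ 2*a) {u v : V} (hne : u ≠ v)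
    (hb : row v < row u ∨ (row u = row v ∧ col v ≤ col u)) :
    G.Adj v u ↔ (lam row col qr a (some v) u = jlab1 col a v ∨
      lam row col qr a (some v) u = jlab2 col a v ∨
      lam row col qr a (some v) u = jlab3 col a v ∨
      lam row col qr a (some v) u = jlab4 col qs a v) := by
  have hu2a : cidx col u ≤ 2*a - 1 := by have := cidx_lt_card col u; omega
  have hv2a : cidx col v ≤ 2*a - 1 := by have := cidx_lt_card col v; omega
  have hv2a' : cidx col v - 1 ≤ 2*a - 1 := by omega
  have hcol_ne_j4 : ∀ i, colLab a i ≠ jlab4 col qs a v := by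
    intro i
    simp only [jlab4]
    split <;> exact colLab_ne_hLab ha _ _
  have hcol_ne_j2 : ∀ i, colLab a i ≠ jlab2 col a v := fun i => colLab_ne_hLab ha _ _
  rcases lt_trichotomy (col u) (col v) with hc | hc | hc
  · -- col u < col v : u is strictly to the left of v, row u > row v
    have hr : row v < row u := by
      rcases hb with hb | ⟨_, hb⟩
      · exact hb
      · omega
    have hrow_ne : ¬(row u = row v) := by omega
    have hlam : lam row col qr a (some v) u = colLab a (cidx col u) := by
      simp only [lam]
      rw [if_neg (by tauto)]
    rcases Nat.lt_or_ge (col u + 1) (col v) with hc2 | hc2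
    · -- col u ≤ col v - 2 : non adjacent
      refine iff_of_false (fun hA => ?_) (fun hR => ?_)
      · rcases (h v u).1 hA with ⟨_, h1 | ⟨h1, _⟩ | ⟨h1, _⟩⟩ <;> omega
      · have hlt : cidx col u < cidx col v := cidx_lt_cidx col hc
        rw [hlam] at hR
        rcases hR with hR | hR | hR | hR
        · exact colLab_ne hu2a hv2a (by omega) hR
        · exact hcol_ne_j2 _ hR
        · revert hR
          simp only [jlab3]
          split
          · rename_i hcond
            obtain ⟨hpos, w, hw⟩ := hcond
            have hw1 : col w + 1 = col v := by omega
            have := cidx_succ col hw1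
            intro hR
            have : cidx col u = cidx col v - 1 := (colLab_inj hu2a hv2a').1 hR
            have : col u = col w := col_eq_of_cidx_eq col (by omega)
            omega
          · exact colLab_ne hu2a hv2a (by omega)
        · exact hcol_ne_j4 _ hR
    · -- col u + 1 = col v : adjacent, third label
      have hc3 : col u + 1 = col v := by omega
      have hsucc := cidx_succ col hc3
      refine iff_of_true ((h v u).2 ⟨hne.symm, Or.inr (Or.inr ⟨hc3, Or.inl hr⟩)⟩) ?_
      refine Or.inr (Or.inr (Or.inl ?_))
      rw [hlam]
      simp only [jlab3]
      rw [if_pos ⟨by omega, ⟨u, by omega⟩⟩]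
      rw [colLab_inj hu2a hv2a']
      omega
  · -- same column : adjacent
    have hcc := cidx_eq_cidx col hc
    refine iff_of_true ((h v u).2 ⟨hne.symm, Or.inl hc.symm⟩) ?_
    by_cases hcond : (row u = row v ∧ qr u = true ∧ cidx col u ≤ cidx col v + 1)
    · refine Or.inr (Or.inl ?_)
      simp only [lam, jlab2]
      rw [if_pos hcond, hLab_inj]
      omega
    · refine Or.inl ?_
      simp only [lam, jlab1]
      rw [if_neg hcond, colLab_inj hu2a hv2a]
      omega
  · -- col u > col v
    have hsucc1 : cidx col v < cidx col u := cidx_lt_cidx col hc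
    rcases Nat.lt_or_ge (col v + 1) (col u) with hc2 | hc2
    · -- col u ≥ col v + 2 : non adjacent
      refine iff_of_false (fun hA => ?_) (fun hR => ?_)
      · rcases (h v u).1 hA with ⟨_, h1 | ⟨h1, _⟩ | ⟨h1, _⟩⟩ <;> omega
      · by_cases hcond : (row u = row v ∧ qr u = true ∧ cidx col u ≤ cidx col v + 1)
        · have hcu : cidx col u = cidx col v + 1 := by omega
          have hlam : lam row col qr a (some v) u = hLab a (cidx col v + 1) := by
            simp only [lam]
            rw [if_pos hcond, hcu]
          rw [hlam] at hR
          rcases hR with hR | hR | hR | hR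
          · exact (colLab_ne_hLab ha _ _) hR.symm
          · exact hLab_ne (by omega) hR
          · revert hR
            simp only [jlab3]
            split <;> exact fun hR => (colLab_ne_hLab ha _ _) hR.symm
          · revert hR
            simp only [jlab4]
            split
            · rename_i hcond4
              obtain ⟨_, w, hw⟩ := hcond4
              intro _
              have h1 := cidx_succ col (show col v + 1 = col w by omega)
              have h2 : col u = col w := col_eq_of_cidx_eq col (by omega)
              omega
            · exact hLab_ne (by omega)
        · have hlam : lam row col qr a (some v) u = colLab a (cidx col u) := by
            simp only [lam]
            rw [if_neg hcond]
          rw [hlam] at hR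
          rcases hR with hR | hR | hR | hR
          · exact colLab_ne hu2a hv2a (by omega) hR
          · exact hcol_ne_j2 _ hR
          · revert hR
            simp only [jlab3]
            split <;> exact colLab_ne hu2a (by omega) (by omega)
          · exact hcol_ne_j4 _ hR
    · -- col u = col v + 1
      have hc3 : col v + 1 = col u := by omega
      have hsucc := cidx_succ col hc3
      have hcu2a : cidx col v + 1 ≤ 2*a - 1 := by omega
      rcases Nat.lt_or_ge (row v) (row u) with hr | hr
      · -- strictly higher row : not adjacent
        refine iff_of_false (fun hA => ?_) (fun hR => ?_)
        · rcases (h v u).1 hA with ⟨_, h1 | ⟨h1, h2 | ⟨h2, _⟩⟩ | ⟨h1, h2 | ⟨h2, _⟩⟩⟩ <;> omega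
        · have hlam : lam row col qr a (some v) u = colLab a (cidx col u) := by
            simp only [lam]
            rw [if_neg (by intro hh; omega)]
          rw [hlam] at hR
          rcases hR with hR | hR | hR | hR
          · exact colLab_ne hu2a hv2a (by omega) hR
          · exact hcol_ne_j2 _ hR
          · revert hR
            simp only [jlab3]
            split <;> exact colLab_ne hu2a (by omega) (by omega)
          · exact hcol_ne_j4 _ hR
      · -- same row
        have hrow : row u = row v := by
          rcases hb with hb | ⟨hb, _⟩ <;> omega
        by_cases hqr : qr u = true
        · have hlam : lam row col qr a (some v) u = hLab a (cidx col v + 1) := by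
            simp only [lam]
            rw [if_pos ⟨hrow, hqr, by omega⟩, ← hsucc]
          by_cases hqs : qs v = true
          · refine iff_of_true ((h v u).2 ⟨hne.symm, Or.inr (Or.inl ⟨hc3, Or.inr ⟨hrow.symm, hqs, hqr⟩⟩)⟩) ?_
            refine Or.inr (Or.inr (Or.inr ?_))
            rw [hlam]
            simp only [jlab4]
            rw [if_pos ⟨hqs, ⟨u, by omega⟩⟩]
          · refine iff_of_false (fun hA => ?_) (fun hR => ?_)
            · rcases (h v u).1 hA with ⟨_, h1 | ⟨h1, h2 | ⟨h2, h3, _⟩⟩ | ⟨h1, h2 | ⟨h2, _⟩⟩⟩ <;>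
                first | omega | (exact hqs h3)
            · rw [hlam] at hR
              rcases hR with hR | hR | hR | hR
              · exact (colLab_ne_hLab ha _ _) hR.symm
              · exact hLab_ne (by omega) hR
              · revert hR
                simp only [jlab3]
                split <;> exact fun hR => (colLab_ne_hLab ha _ _) hR.symm
              · revert hR
                simp only [jlab4]
                rw [if_neg (by tauto)]
                exact hLab_ne (by omega)
        · have hlam : lam row col qr a (some v) u = colLab a (cidx col u) := by
            simp only [lam]
            rw [if_neg (by tauto)]
          refine iff_of_false (fun hA => ?_) (fun hR => ?_)
          · rcases (h v u).1 hA with ⟨_, h1 | ⟨h1, h2 | ⟨h2, _, h3⟩⟩ | ⟨h1, h2 | ⟨h2, _⟩⟩⟩ <;>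
              first | omega | (exact hqr h3)
          · rw [hlam] at hR
            rcases hR with hR | hR | hR | hR
            · exact colLab_ne hu2a hv2a (by omega) hR
            · exact hcol_ne_j2 _ hR
            · revert hR
              simp only [jlab3]
              split <;> exact colLab_ne hu2a (by omega) (by omega)
            · exact hcol_ne_j4 _ hR

end Model

section Shift
variable {V : Type} [Fintype V] [DecidableEq V]

lemma cidx_le_cidx (col : V → ℕ) {u v : V} (hcol : col u ≤ col v) :
    cidx col u ≤ cidx col v :=
  Finset.card_le_card (fun x hx => by
    simp only [Finset.mem_filter] at hx ⊢
    exact ⟨hx.1, by omega⟩)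

/-- `u` comes (weakly) before `v` in the processing order. -/
abbrev brel (row col : V → ℕ) (x y : V) : Prop :=
  row y < row x ∨ (row x = row y ∧ col y ≤ col x)

lemma shift {G : SimpleGraph V} (row col : V → ℕ) (qr : V → Bool) {a : ℕ} (ha : 1 ≤ a)
    {done : List V} {v : V}
    (hdone : ∀ u ∈ done, u = v ∨ brel row col u v)
    (w' : Option V)
    (hw : ∀ w, w' = some w → brel row col v w)
    (hI : BInv G (2*a+3) done (lam row col qr a (some v))) :
    BInv G (2*a+3) done (lam row col qr a w') := by
  have hcu : ∀ u ∈ done, row u = row v → cidx col v ≤ cidx col u := by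
    intro u hu hr
    rcases hdone u hu with rfl | hb | ⟨hb1, hb2⟩
    · exact le_refl _
    · omega
    · exact cidx_le_cidx col hb2
  have flushed : BInv G (2*a+3) done (fun u => colLab a (cidx col u)) := by
    have F1 := BInv_relabel hI (hLab a (cidx col v + 1)) (colLab a (cidx col v + 1))
    have F2 := BInv_relabel F1 (hLab a (cidx col v)) (colLab a (cidx col v))
    refine BInv_congr F2 ?_
    intro u hu
    by_cases hcond : (row u = row v ∧ qr u = true ∧ cidx col u ≤ cidx col v + 1)
    · have hge : cidx col v ≤ cidx col u := hcu u hu hcond.1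
      have hlam : lam row col qr a (some v) u = hLab a (cidx col u) := by
        simp only [lam]; rw [if_pos hcond]
      rw [hlam]
      have hor : cidx col u = cidx col v ∨ cidx col u = cidx col v + 1 := by
        have := hcond.2.2; omega
      rcases hor with he | he
      · rw [he, if_neg (hLab_ne (by omega : cidx col v % 2 ≠ (cidx col v + 1) % 2)),
          if_pos rfl]
      · rw [he, if_pos rfl, if_neg (colLab_ne_hLab ha _ _)]
    · have hlam : lam row col qr a (some v) u = colLab a (cidx col u) := by
        simp only [lam]; rw [if_neg hcond]
      rw [hlam, if_neg (colLab_ne_hLab ha _ _), if_neg (colLab_ne_hLab ha _ _)]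
  rcases w' with _ | w
  · exact BInv_congr flushed (fun u _ => rfl)
  · have hbw : brel row col v w := hw w rfl
    by_cases hcase1 : row w = row v ∧ cidx col w = cidx col v
    · refine BInv_congr hI ?_
      intro u hu
      simp only [lam, hcase1.1, hcase1.2]
    · by_cases hcase2 : row w = row v ∧ cidx col w + 1 = cidx col v
      · -- flush only the holding of column (cidx v + 1)
        have F1 := BInv_relabel hI (hLab a (cidx col v + 1)) (colLab a (cidx col v + 1))
        refine BInv_congr F1 ?_
        intro u hu
        by_cases hcond : (row u = row v ∧ qr u = true ∧ cidx col u ≤ cidx col v + 1)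
        · have hge : cidx col v ≤ cidx col u := hcu u hu hcond.1
          have hlam : lam row col qr a (some v) u = hLab a (cidx col u) := by
            simp only [lam]; rw [if_pos hcond]
          rw [hlam]
          have hor : cidx col u = cidx col v ∨ cidx col u = cidx col v + 1 := by
            have := hcond.2.2; omega
          rcases hor with he | he
          · rw [if_neg (by rw [he]; exact hLab_ne (by omega : cidx col v % 2 ≠ (cidx col v + 1) % 2))]
            simp only [lam]
            rw [if_pos ⟨hcond.1.trans hcase2.1.symm, hcond.2.1, by omega⟩]
          · rw [he, if_pos rfl]
            simp only [lam]
            rw [if_neg (fun hc => by have := hc.2.2; omega), he]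
        · have hlam : lam row col qr a (some v) u = colLab a (cidx col u) := by
            simp only [lam]; rw [if_neg hcond]
          rw [hlam, if_neg (colLab_ne_hLab ha _ _)]
          simp only [lam]
          rw [if_neg (fun hc =>
            hcond ⟨hc.1.trans hcase2.1, hc.2.1, by have := hc.2.2; omega⟩)]
      · -- both holdings are dead for w
        have hkey : ∀ u ∈ done,
            ¬(row u = row w ∧ qr u = true ∧ cidx col u ≤ cidx col w + 1) := by
          intro u hu hcon
          rcases hbw with hb | ⟨hb1, hb2⟩
          · rcases hdone u hu with rfl | hb' | ⟨hb1', hb2'⟩ <;> omega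
          · have hcw : cidx col w ≤ cidx col v := cidx_le_cidx col hb2
            have h1 : cidx col w ≠ cidx col v := fun hc => hcase1 ⟨hb1.symm, hc⟩
            have h2 : cidx col w + 1 ≠ cidx col v := fun hc => hcase2 ⟨hb1.symm, hc⟩
            have h3 : cidx col v ≤ cidx col u := hcu u hu (hcon.1.trans hb1.symm)
            have := hcon.2.2
            omega
        refine BInv_congr flushed ?_
        intro u hu
        simp only [lam]
        rw [if_neg (hkey u hu)]

end Shift

section BuildRec
variable {V : Type} [Fintype V] [DecidableEq V]

lemma buildRec {G : SimpleGraph V} {row col : V → ℕ} {qr qs : V → Bool}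
    (h : IsUBubbleModel G row col qr qs) {a : ℕ} (ha : 1 ≤ a)
    (hK : (Finset.univ.image col).card ≤ 2*a) :
    ∀ (todo : List V), ∀ (done : List V) (v : V),
      (done ++ v :: todo).Pairwise (brel row col) →
      (done ++ v :: todo).Nodup →
      BInv G (2*a+3) (done ++ [v]) (lam row col qr a (some v)) →
      BInv G (2*a+3) (done ++ v :: todo) (lam row col qr a none) := by
  intro todo
  induction todo with
  | nil =>
      intro done v hpw hnd hI
      obtain ⟨hd, hc, hcross⟩ := List.pairwise_append.1 hpw
      have hdone1 : ∀ u ∈ done ++ [v], u = v ∨ brel row col u v := by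
        intro u hu
        rcases List.mem_append.1 hu with hu | hu
        · exact Or.inr (hcross u hu v (by simp))
        · simp at hu; exact Or.inl hu
      exact shift row col qr ha hdone1 none (fun w hw => by simp at hw) hI
  | cons w t ih =>
      intro done v hpw hnd hI
      obtain ⟨hd, hc, hcross⟩ := List.pairwise_append.1 hpw
      have hvw : brel row col v w := (List.pairwise_cons.1 hc).1 w (by simp)
      have hdone1 : ∀ u ∈ done ++ [v], u = v ∨ brel row col u v := by
        intro u hu
        rcases List.mem_append.1 hu with hu | hu
        · exact Or.inr (hcross u hu v (by simp))
        · simp at hu; exact Or.inl hu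
      have hS : BInv G (2*a+3) (done ++ [v]) (lam row col qr a (some w)) :=
        shift row col qr ha hdone1 (some w) (fun w'' hw'' => by cases hw''; exact hvw) hI
      have hwnotin : w ∉ done ++ [v] := by
        intro hmem
        rcases List.mem_append.1 hmem with hmem | hmem
        · obtain ⟨-, -, hdisj⟩ := List.nodup_append.1 hnd
          exact hdisj w hmem w (by simp) rfl
        · simp at hmem
          obtain ⟨-, hcn⟩ := List.nodup_append.1 hnd
          have := List.nodup_cons.1 hcn.1
          exact this.1 (by simp [hmem])
      have hAdd := BInv_add hS w hwnotin (aLab a) (jtgt row col qr a w)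
        (jlab1 col a w) (jlab2 col a w) (jlab3 col a w) (jlab4 col qs a w)
        (Ne.symm (colLab_ne_aLab _))
        (Ne.symm (hLab_ne_aLab _))
        (by unfold jlab3; split <;> exact Ne.symm (colLab_ne_aLab _))
        (by unfold jlab4; split <;> exact Ne.symm (hLab_ne_aLab _))
        (fun u _ => lam_ne_aLab row col qr ha _ u)
        (by
          intro u hu
          have hne : u ≠ w := fun hc => hwnotin (hc ▸ hu)
          have hb : brel row col u w := by
            rcases List.mem_append.1 hu with hu' | hu'
            · exact hcross u hu' w (by simp)
            · simp at hu'; subst hu'; exact hvw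
          exact sound h ha hK hne hb)
      have hstep : BInv G (2*a+3) ((done ++ [v]) ++ [w]) (lam row col qr a (some w)) := by
        refine BInv_congr hAdd ?_
        intro u hu
        by_cases huw : u = w
        · subst huw
          rw [if_pos rfl, ← lam_self row col qr a u]
        · rw [if_neg huw]
      have := ih (done ++ [v]) w (by simpa [List.append_assoc] using hpw)
        (by simpa [List.append_assoc] using hnd) hstep
      simpa [List.append_assoc] using this

end BuildRec

lemma evalCW_nonempty {k : ℕ} (e : CW k) : Nonempty (evalCW e).V := by
  induction e with
  | vert l => exact ⟨PUnit.unit⟩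
  | union a b iha ihb => exact ⟨Sum.inl iha.some⟩
  | relabel i j c ih => exact ih
  | join i j hij c ih => exact ih

lemma ubm_hcw {V : Type} [Fintype V] [DecidableEq V] [Nonempty V] {G : SimpleGraph V}
    {row col : V → ℕ} {qr qs : V → Bool} (h : IsUBubbleModel G row col qr qs)
    {a : ℕ} (ha : 1 ≤ a) (hK : (Finset.univ.image col).card ≤ 2*a) :
    HasCliqueWidthLE G (2*a+3) := by
  classical
  have ef := Fintype.equivFin V
  set srel : V → V → Prop := fun x y => row y < row x ∨
    (row x = row y ∧ (col y < col x ∨ (col y = col x ∧ ((ef x : ℕ) ≤ (ef y : ℕ)))))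
    with hsrel
  haveI hdec : DecidableRel srel := fun x y => by rw [hsrel]; infer_instance
  haveI : IsTrans V srel := ⟨by intro x y z hxy hyz; simp only [hsrel] at *; omega⟩
  haveI : IsTotal V srel := ⟨by intro x y; simp only [hsrel]; omega⟩
  haveI : IsAntisymm V srel := ⟨by
    intro x y hxy hyx
    have hvl : (ef x : ℕ) = (ef y : ℕ) := by simp only [hsrel] at *; omega
    exact ef.injective (Fin.ext hvl)⟩
  set L := Finset.univ.sort srel with hLdef
  have hmem : ∀ v : V, v ∈ L := fun v => (Finset.mem_sort srel).2 (Finset.mem_univ v)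
  have hnd : L.Nodup := Finset.sort_nodup Finset.univ srel
  have hpw : L.Pairwise (brel row col) := by
    refine List.Pairwise.imp ?_ (Finset.pairwise_sort Finset.univ srel)
    intro x y hxy
    simp only [hsrel] at hxy
    unfold brel
    omega
  obtain ⟨v0, rest, hL⟩ : ∃ v0 rest, L = v0 :: rest := by
    cases hLc : L with
    | nil => exact absurd (hLc ▸ hmem (Classical.arbitrary V)) List.not_mem_nil
    | cons z l => exact ⟨z, l, rfl⟩
  have base : BInv G (2*a+3) ([] ++ [v0]) (lam row col qr a (some v0)) :=
    BInv_single G (2*a+3) v0 _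
  rw [hL] at hpw hnd
  have main := buildRec h ha hK rest [] v0 hpw hnd base
  obtain ⟨e, φ, hadj, -⟩ := main
  refine ⟨e, ⟨?_⟩⟩
  have hmem' : ∀ v : V, v ∈ ([] : List V) ++ v0 :: rest := fun v => hL ▸ hmem v
  let ψ : {u // u ∈ ([] : List V) ++ v0 :: rest} ≃ V := Equiv.subtypeUnivEquiv hmem'
  have hval : ∀ z : V, ((φ ((φ.trans ψ).symm z)) : V) = z := by
    intro z
    rw [Equiv.symm_trans_apply, Equiv.apply_symm_apply]
    rfl
  exact ⟨(φ.trans ψ).symm, by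
    intro x y
    rw [hadj, hval, hval]⟩

lemma one_le_compl_cliqueNum {V : Type} [Fintype V] [Nonempty V] (G : SimpleGraph V) :
    1 ≤ Gᶜ.cliqueNum := by
  classical
  have hclique : Gᶜ.IsClique (({Classical.arbitrary V} : Finset V) : Set V) := by
    rw [Finset.coe_singleton]
    exact Set.pairwise_singleton _ _
  have hle : ({Classical.arbitrary V} : Finset V).card ≤ Gᶜ.cliqueNum :=
    SimpleGraph.IsClique.card_le_cliqueNum (tc := hclique)
  simpa using hle

lemma card_cols_le {V : Type} [Fintype V] {G : SimpleGraph V} {row col : V → ℕ}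
    {qr qs : V → Bool} (h : IsUBubbleModel G row col qr qs) :
    (Finset.univ.image col).card ≤ 2 * Gᶜ.cliqueNum := by
  classical
  set K := (Finset.univ.image col).card with hKdef
  rcases Nat.eq_zero_or_pos K with hK0 | hKpos
  · omega
  set m := (K+1)/2 with hm
  have h2m : ∀ j : Fin m, 2*(j:ℕ) < K := fun j => by have := j.2; omega
  have oIso := (Finset.univ.image col).orderIsoOfFin hKdef.symm
  set f : Fin m → ℕ := fun j => ((oIso ⟨2*(j:ℕ), h2m j⟩ : {x // x ∈ Finset.univ.image col}) : ℕ)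
    with hf
  have hgap : ∀ j j' : Fin m, (j:ℕ) < (j':ℕ) → f j + 2 ≤ f j' := by
    intro j j' hjj
    have hmid : 2*(j:ℕ)+1 < K := by have := h2m j'; omega
    have h1 : oIso ⟨2*(j:ℕ), h2m j⟩ < oIso ⟨2*(j:ℕ)+1, hmid⟩ :=
      oIso.strictMono (by simp [Fin.lt_def])
    have h2 : oIso ⟨2*(j:ℕ)+1, hmid⟩ < oIso ⟨2*(j':ℕ), h2m j'⟩ :=
      oIso.strictMono (by simp [Fin.lt_def]; omega)
    have hv1 : (oIso ⟨2*(j:ℕ), h2m j⟩ : ℕ) < (oIso ⟨2*(j:ℕ)+1, hmid⟩ : ℕ) := h1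
    have hv2 : (oIso ⟨2*(j:ℕ)+1, hmid⟩ : ℕ) < (oIso ⟨2*(j':ℕ), h2m j'⟩ : ℕ) := h2
    simp only [hf]
    omega
  have hex : ∀ j : Fin m, ∃ w : V, col w = f j := by
    intro j
    obtain ⟨w, -, hw⟩ := Finset.mem_image.1 (oIso ⟨2*(j:ℕ), h2m j⟩).2
    exact ⟨w, hw⟩
  choose g hg using hex
  have ginj : Function.Injective g := by
    intro j j' hE
    have hfe : f j = f j' := by rw [← hg j, ← hg j', hE]
    by_contra hne
    have hne' : (j:ℕ) ≠ (j':ℕ) := fun hc => hne (Fin.ext hc)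
    rcases Nat.lt_or_ge (j:ℕ) (j':ℕ) with hlt | hge
    · have := hgap j j' hlt; omega
    · have := hgap j' j (by omega); omega
  have hclique : Gᶜ.IsClique ((Finset.univ.image g : Finset V) : Set V) := by
    intro x hx y hy hxy
    simp only [Finset.coe_image, Set.mem_image, Finset.mem_coe] at hx hy
    obtain ⟨j, -, rfl⟩ := hx
    obtain ⟨j', -, rfl⟩ := hy
    rw [SimpleGraph.compl_adj]
    refine ⟨hxy, fun hA => ?_⟩
    have hne' : j ≠ j' := fun hc => hxy (by rw [hc])
    have hcols : col (g j) + 2 ≤ col (g j') ∨ col (g j') + 2 ≤ col (g j) := by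
      rw [hg j, hg j']
      rcases Nat.lt_or_ge (j:ℕ) (j':ℕ) with hlt | hge
      · exact Or.inl (hgap j j' hlt)
      · refine Or.inr (hgap j' j ?_)
        have : (j:ℕ) ≠ (j':ℕ) := fun hc => hne' (Fin.ext hc)
        omega
    rcases (h (g j) (g j')).1 hA with ⟨-, h1 | ⟨h1, -⟩ | ⟨h1, -⟩⟩ <;> omega
  have hcard : (Finset.univ.image g).card = m := by
    rw [Finset.card_image_of_injective _ ginj, Finset.card_univ, Fintype.card_fin]
  have hle : (Finset.univ.image g).card ≤ Gᶜ.cliqueNum :=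
    SimpleGraph.IsClique.card_le_cliqueNum (tc := hclique)
  omega

/-- If a graph admits a U-bubble model, then its clique-width is at most
2·α(G) + 3, where α(G) is the independence number. -/
theorem ubm_cliqueWidth_le_two_indepNum_add_three {V : Type} [Fintype V]
    (G : SimpleGraph V) (row col : V → ℕ) (qr qs : V → Bool)
    (h : IsUBubbleModel G row col qr qs) :
    cliqueWidth G ≤ 2 * indepNum G + 3 := by
  classical
  rcases isEmpty_or_nonempty V with hemp | hne
  · have hempty : {k | HasCliqueWidthLE G k} = ∅ := by
      ext k
      simp only [Set.mem_setOf_eq, Set.mem_empty_iff_false, iff_false]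
      rintro ⟨e, ⟨iso⟩⟩
      exact hemp.false (iso.symm (evalCW_nonempty e).some)
    rw [cliqueWidth, hempty, Nat.sInf_empty]
    exact Nat.zero_le _
  · have ha : 1 ≤ Gᶜ.cliqueNum := one_le_compl_cliqueNum G
    have hK : (Finset.univ.image col).card ≤ 2 * Gᶜ.cliqueNum := card_cols_le h
    have hH : HasCliqueWidthLE G (2 * Gᶜ.cliqueNum + 3) := ubm_hcw h ha hK
    have hfin : cliqueWidth G ≤ 2 * Gᶜ.cliqueNum + 3 := Nat.sInf_le hH
    simpa [indepNum] using hfin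
end

section
/- Let G be a graph given by a U-bubble model B, and let φ_B(G) be the group number of G in B. Then φ_B(G) ≤ ω(G) − 1, where ω(G) is the clique number of G. -/
lemma clique_ncard_le {V : Type*} [Fintype V] (G : SimpleGraph V) (v : V) (S : Set V)
    (hv : v ∉ S) (hc : G.IsClique (insert v S)) : S.ncard ≤ G.cliqueNum - 1 := by
  classical
  have h1 : (insert v S).ncard = S.ncard + 1 := Set.ncard_insert_of_notMem hv (Set.toFinite S)
  have h2 : (insert v S).ncard ≤ G.cliqueNum := by
    have := @SimpleGraph.IsClique.card_le_cliqueNum V G _ (insert v S).toFinset ?_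
    · rwa [Set.ncard_eq_toFinset_card']
    · simpa using hc
  omega



lemma bound_one {V : Type*} [Fintype V] (G : SimpleGraph V) (row col : V → ℕ)
    (qr qs : V → Bool) (h : IsUBubbleModel G row col qr qs) (v : V) :
    (G.neighborSet v ∩
      ({w | col w + 1 = col v ∧ row v < row w} ∪
       {w | col w = col v ∧ row w < row v} ∪
       ({w | col w + 1 = col v ∧ row w = row v ∧ qs w = true} ∪
        {w | col w = col v ∧ row w = row v ∧ qr w = true}))).ncard ≤ G.cliqueNum - 1 := by
  apply clique_ncard_le G v
  · simp [SimpleGraph.irrefl]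
  · intro a ha b hb hab
    rcases ha with rfl | ⟨hav, hA⟩
    · rcases hb with rfl | ⟨hbv, _⟩
      · exact absurd rfl hab
      · exact (SimpleGraph.mem_neighborSet _ _ _).mp hbv
    · rcases hb with rfl | ⟨hbv, hB⟩
      · exact ((SimpleGraph.mem_neighborSet _ _ _).mp hav).symm
      · rw [h a b]
        refine ⟨hab, ?_⟩
        rcases hA with (⟨a1,a2⟩|⟨a1,a2⟩)|(⟨a1,a2,a3⟩|⟨a1,a2,a3⟩) <;>
          rcases hB with (⟨b1,b2⟩|⟨b1,b2⟩)|(⟨b1,b2,b3⟩|⟨b1,b2,b3⟩) <;>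
          simp_all <;> omega

lemma bound_two {V : Type*} [Fintype V] (G : SimpleGraph V) (row col : V → ℕ)
    (qr qs : V → Bool) (h : IsUBubbleModel G row col qr qs) (v : V) :
    (G.neighborSet v ∩
      ({w | col w + 1 = col v ∧ row v < row w} ∪
       {w | col w = col v ∧ row w < row v} ∪
       {w | col w = col v ∧ row w = row v})).ncard ≤ G.cliqueNum - 1 := by
  apply clique_ncard_le G v
  · simp [SimpleGraph.irrefl]
  · intro a ha b hb hab
    rcases ha with rfl | ⟨hav, hA⟩
    · rcases hb with rfl | ⟨hbv, _⟩
      · exact absurd rfl hab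
      · exact (SimpleGraph.mem_neighborSet _ _ _).mp hbv
    · rcases hb with rfl | ⟨hbv, hB⟩
      · exact ((SimpleGraph.mem_neighborSet _ _ _).mp hav).symm
      · rw [h a b]
        refine ⟨hab, ?_⟩
        rcases hA with (⟨a1,a2⟩|⟨a1,a2⟩)|⟨a1,a2⟩ <;>
          rcases hB with (⟨b1,b2⟩|⟨b1,b2⟩)|⟨b1,b2⟩ <;>
          simp_all <;> omega

/-- The group of a vertex w in its column of a U-bubble model: its column
together with its neighbourhood in the following column. Two vertices of the
same column are in the same group iff these data coincide. -/
def group {V : Type*} (G : SimpleGraph V) (col : V → ℕ) (w : V) : ℕ × Set V :=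
  (col w, {x | col x = col w + 1 ∧ G.Adj w x})

/-- The number of groups represented in a vertex set S. -/
noncomputable def groupCount {V : Type*} (G : SimpleGraph V) (col : V → ℕ)
    (S : Set V) : ℕ :=
  (group G col '' S).ncard

/-- The group number of a vertex v in a U-bubble model: the larger of the
numbers of groups met by N(v) intersected with the vertices of the previous
column strictly below v and of v's column strictly above v, together with
either A = B_{i,j-1}^{*+} ∪ B_{i,j}^{+*} or A = B_{i,j}. -/
noncomputable def groupNumber {V : Type*} (G : SimpleGraph V)
    (row col : V → ℕ) (qr qs : V → Bool) (v : V) : ℕ :=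
  max
    (groupCount G col (G.neighborSet v ∩
      ({w | col w + 1 = col v ∧ row v < row w} ∪
       {w | col w = col v ∧ row w < row v} ∪
       ({w | col w + 1 = col v ∧ row w = row v ∧ qs w = true} ∪
        {w | col w = col v ∧ row w = row v ∧ qr w = true}))))
    (groupCount G col (G.neighborSet v ∩
      ({w | col w + 1 = col v ∧ row v < row w} ∪
       {w | col w = col v ∧ row w < row v} ∪
       {w | col w = col v ∧ row w = row v})))

/-- The group number of a graph G in a U-bubble model B. -/
noncomputable def graphGroupNumber {V : Type*} (G : SimpleGraph V)
    (row col : V → ℕ) (qr qs : V → Bool) : ℕ :=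
  ⨆ v, groupNumber G row col qr qs v

/-- The group number of a graph in a U-bubble model is at most ω(G) - 1. -/
theorem groupNumber_le_cliqueNum_sub_one {V : Type*} [Fintype V]
    (G : SimpleGraph V) (row col : V → ℕ) (qr qs : V → Bool)
    (h : IsUBubbleModel G row col qr qs) :
    graphGroupNumber G row col qr qs ≤ G.cliqueNum - 1 := by
    classical
  rcases isEmpty_or_nonempty V with hV | hV
  · simp [graphGroupNumber, ciSup_of_empty]
  · apply ciSup_le
    intro v
    unfold groupNumber groupCount
    apply max_le
    · exact le_trans (Set.ncard_image_le (Set.toFinite _)) (bound_one G row col qr qs h v)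
    · exact le_trans (Set.ncard_image_le (Set.toFinite _)) (bound_two G row col qr qs h v)
end

section
/- Let G be a graph given by a U-bubble model whose light columns C_0, C_1, …, C_p partition the model into heavy parts B̂_1,…,B̂_p (B̂_j spanning from light column C_{j−1} to C_j). If S = S_0 ∪ ⋯ ∪ S_p is a fixed cut of the light columns, then mcs(G, S) = Σ_{j=1}^{p} mcs(G(B̂_j), S_{j−1} ∪ S_j) − Σ_{j=1}^{p−1} |S_j|·|C_j \ S_j|, where mcs(H, T) denotes the maximum size of a cut of H agreeing with T. -/
/-- The number of edges of G inside the vertex set W that are cut by S. -/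
noncomputable def cutSize {V : Type*} (G : SimpleGraph V) (W S : Set V) : ℕ :=
  {e : Sym2 V | e ∈ G.edgeSet ∧
    ∃ u v, e = s(u, v) ∧ u ∈ W ∧ v ∈ W ∧ u ∈ S ∧ v ∉ S}.ncard

/-- The maximum size of a cut of the induced subgraph G[W] agreeing with the
fixed cut T on the set C. -/
noncomputable def mcsOn {V : Type*} (G : SimpleGraph V) (W C T : Set V) : ℕ :=
  sSup {m | ∃ S ⊆ W, S ∩ C = T ∩ C ∩ W ∧ m = cutSize G W S}

open Finset

section AuxLemmas
set_option linter.unusedSectionVars false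
variable {V : Type*} [Fintype V] (G : SimpleGraph V)

/-- The set of cut edges inside W. -/
def cutEdges (G : SimpleGraph V) (W S : Set V) : Set (Sym2 V) :=
  {e | e ∈ G.edgeSet ∧ ∃ u v, e = s(u, v) ∧ u ∈ W ∧ v ∈ W ∧ u ∈ S ∧ v ∉ S}

lemma cutSize_eq_cutEdges (S W : Set V) : cutSize G W S = (cutEdges G W S).ncard := rfl

lemma cutEdges_mono (S : Set V) {W W' : Set V} (hW : ∀ v, v ∈ W → v ∈ W') :
    cutEdges G W S ⊆ cutEdges G W' S := by
  rintro e ⟨he, u, v, rfl, hu, hv, hus, hvs⟩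
  exact ⟨he, u, v, rfl, hW u hu, hW v hv, hus, hvs⟩

lemma cutEdges_congr (S : Set V) {W W' : Set V} (hW : ∀ v, v ∈ W ↔ v ∈ W') :
    cutEdges G W S = cutEdges G W' S :=
  Set.Subset.antisymm (cutEdges_mono G S fun v hv => (hW v).1 hv)
    (cutEdges_mono G S fun v hv => (hW v).2 hv)

lemma cutSize_le (W S : Set V) : cutSize G W S ≤ Fintype.card (Sym2 V) := by
  have := Set.ncard_le_ncard (Set.subset_univ (cutEdges G W S)) Set.finite_univ
  simpa [cutSize_eq_cutEdges, Set.ncard_univ, Nat.card_eq_fintype_card] using this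

lemma cutSize_congr (W S S' : Set V) (hs : ∀ v ∈ W, (v ∈ S ↔ v ∈ S')) :
    cutSize G W S = cutSize G W S' := by
  unfold cutSize
  congr 1
  ext e
  constructor
  · rintro ⟨he, u, v, rfl, hu, hv, hus, hvs⟩
    exact ⟨he, u, v, rfl, hu, hv, (hs u hu).1 hus, fun hx => hvs ((hs v hv).2 hx)⟩
  · rintro ⟨he, u, v, rfl, hu, hv, hus, hvs⟩
    exact ⟨he, u, v, rfl, hu, hv, (hs u hu).2 hus, fun hx => hvs ((hs v hv).1 hx)⟩

lemma mcsOn_bddAbove (W C T : Set V) :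
    BddAbove {m | ∃ S ⊆ W, S ∩ C = T ∩ C ∩ W ∧ m = cutSize G W S} :=
  ⟨Fintype.card (Sym2 V), by rintro m ⟨S, _, _, rfl⟩; exact cutSize_le G W S⟩

lemma le_mcsOn (W C T S : Set V) (h1 : S ⊆ W) (h2 : S ∩ C = T ∩ C ∩ W) :
    cutSize G W S ≤ mcsOn G W C T :=
  le_csSup (mcsOn_bddAbove G W C T) ⟨S, h1, h2, rfl⟩

lemma exists_mcsOn (W C T : Set V) :
    ∃ S, S ⊆ W ∧ S ∩ C = T ∩ C ∩ W ∧ mcsOn G W C T = cutSize G W S := by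
  have hne : {m | ∃ S ⊆ W, S ∩ C = T ∩ C ∩ W ∧ m = cutSize G W S}.Nonempty := by
    refine ⟨cutSize G W (T ∩ C ∩ W), T ∩ C ∩ W, fun x hx => hx.2, ?_, rfl⟩
    ext x; simp only [Set.mem_inter_iff]; tauto
  obtain ⟨S, h1, h2, h3⟩ := Nat.sSup_mem hne (mcsOn_bddAbove G W C T)
  exact ⟨S, h1, h2, h3⟩

lemma cutSize_column (row col : V → ℕ) (qr qs : V → Bool)
    (h : IsUBubbleModel G row col qr qs) (c : ℕ) (S : Set V) :
    cutSize G {v | col v = c} S =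
      (S ∩ {v | col v = c}).ncard * ({v | col v = c} \ S).ncard := by
  have himg : {e : Sym2 V | e ∈ G.edgeSet ∧
      ∃ u v, e = s(u, v) ∧ u ∈ {v | col v = c} ∧ v ∈ {v | col v = c} ∧ u ∈ S ∧ v ∉ S}
      = (fun x : V × V => s(x.1, x.2)) '' ((S ∩ {v | col v = c}) ×ˢ ({v | col v = c} \ S)) := by
    ext e
    constructor
    · rintro ⟨he, u, v, rfl, hu, hv, hus, hvs⟩
      exact ⟨(u, v), ⟨⟨hus, hu⟩, ⟨hv, hvs⟩⟩, rfl⟩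
    · rintro ⟨⟨u, v⟩, ⟨⟨hus, hu⟩, ⟨hv, hvs⟩⟩, rfl⟩
      refine ⟨?_, u, v, rfl, hu, hv, hus, hvs⟩
      rw [SimpleGraph.mem_edgeSet, h u v]
      exact ⟨fun h' => hvs (h' ▸ hus), Or.inl (hu.trans hv.symm)⟩
  have hinj : Set.InjOn (fun x : V × V => s(x.1, x.2)) ((S ∩ {v | col v = c}) ×ˢ ({v | col v = c} \ S)) := by
    rintro ⟨u, v⟩ ⟨⟨hus, _⟩, ⟨_, hvs⟩⟩ ⟨u', v'⟩ ⟨⟨hus', _⟩, ⟨_, hvs'⟩⟩ heq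
    rcases Sym2.eq_iff.1 heq with ⟨rfl, rfl⟩ | ⟨rfl, rfl⟩
    · rfl
    · exact absurd hus hvs'
  rw [cutSize, himg, Set.ncard_image_of_injOn hinj, ← Nat.card_coe_set_eq,
    Nat.card_congr (Equiv.Set.prod _ _), Nat.card_prod, Nat.card_coe_set_eq,
    Nat.card_coe_set_eq]

lemma cutSize_split (S : Set V) (row col : V → ℕ) (qr qs : V → Bool)
    (h : IsUBubbleModel G row col qr qs)
    (p : ℕ) (hp : 0 < p) (l : ℕ → ℕ)
    (hmono : ∀ i j, i < j → j ≤ p → l i < l j)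
    (hcover : ∀ v, l 0 ≤ col v ∧ col v ≤ l p) :
    cutSize G Set.univ S + ∑ j ∈ Ioo 0 p, cutSize G {v | col v = l j} S
      = ∑ j ∈ range p, cutSize G {v | l j ≤ col v ∧ col v ≤ l (j + 1)} S := by
  have hadjcol : ∀ u v : V, G.Adj u v →
      col u = col v ∨ col u + 1 = col v ∨ col v + 1 = col u := by
    intro u v huv
    have := ((h u v).1 huv).2
    tauto
  have main : ∀ k, 1 ≤ k → k ≤ p →
      cutSize G {v | col v ≤ l k} S + ∑ j ∈ Ioo 0 k, cutSize G {v | col v = l j} S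
        = ∑ j ∈ range k, cutSize G {v | l j ≤ col v ∧ col v ≤ l (j + 1)} S := by
    intro k
    induction k with
    | zero => omega
    | succ k ih =>
      intro _ hkp
      rcases Nat.eq_or_lt_of_le (Nat.one_le_iff_ne_zero.2 (by omega) : 1 ≤ k + 1) with h1 | h1
      · have hk0 : k = 0 := by omega
        subst hk0
        rw [show (Ioo 0 1 : Finset ℕ) = ∅ from rfl, Finset.sum_empty, Finset.sum_range_one,
          Nat.add_zero, cutSize_eq_cutEdges, cutSize_eq_cutEdges]
        congr 1
        exact cutEdges_congr G S fun v => ⟨fun hv => ⟨(hcover v).1, hv⟩, fun hv => hv.2⟩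
      · have hk1 : 1 ≤ k := by omega
        have hkey : (cutEdges G {v | col v ≤ l (k + 1)} S)
            = cutEdges G {v | col v ≤ l k} S ∪
              cutEdges G {v | l k ≤ col v ∧ col v ≤ l (k + 1)} S := by
          apply Set.Subset.antisymm
          · rintro e ⟨he, u, v, rfl, hu, hv, hus, hvs⟩
            have hadj : G.Adj u v := by rwa [SimpleGraph.mem_edgeSet] at he
            have hab := hadjcol u v hadj
            simp only [Set.mem_setOf_eq] at hu hv
            by_cases hc : col u ≤ l k ∧ col v ≤ l k
            · exact Or.inl ⟨he, u, v, rfl, hc.1, hc.2, hus, hvs⟩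
            · refine Or.inr ⟨he, u, v, rfl, ⟨?_, hu⟩, ⟨?_, hv⟩, hus, hvs⟩ <;> omega
          · rintro e (he | he)
            · exact cutEdges_mono G S (fun v hv => le_trans hv
                (hmono k (k + 1) (lt_add_one k) hkp).le) he
            · exact cutEdges_mono G S (fun v hv => hv.2) he
        have hinter : cutEdges G {v | col v ≤ l k} S ∩
              cutEdges G {v | l k ≤ col v ∧ col v ≤ l (k + 1)} S
            = cutEdges G {v | col v = l k} S := by
          apply Set.Subset.antisymm
          · rintro e ⟨⟨he, u, v, rfl, hu, hv, hus, hvs⟩, ⟨_, u', v', heq, hu', hv', hus', hvs'⟩⟩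
            rcases Sym2.eq_iff.1 heq with ⟨rfl, rfl⟩ | ⟨h1', h2'⟩
            · exact ⟨he, u, v, rfl, le_antisymm hu hu'.1, le_antisymm hv hv'.1, hus, hvs⟩
            · exact absurd (h1' ▸ hus) hvs'
          · intro e he
            have hm1 : ∀ v : V, v ∈ {v | col v = l k} → v ∈ {v | col v ≤ l k} :=
              fun v hv => le_of_eq hv
            have hm2 : ∀ v : V, v ∈ {v | col v = l k} →
                v ∈ {v | l k ≤ col v ∧ col v ≤ l (k + 1)} := by
              intro v hv
              have hle := (hmono k (k + 1) (lt_add_one k) hkp).le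
              have hv' : col v = l k := hv
              exact ⟨hv'.ge, by omega⟩
            exact ⟨cutEdges_mono G S hm1 he, cutEdges_mono G S hm2 he⟩
        have hcard := Set.ncard_union_add_ncard_inter
          (cutEdges G {v | col v ≤ l k} S)
          (cutEdges G {v | l k ≤ col v ∧ col v ≤ l (k + 1)} S)
          (Set.toFinite _) (Set.toFinite _)
        have hIoo : (Ioo 0 (k + 1) : Finset ℕ) = insert k (Ioo 0 k) := by
          ext x
          simp only [mem_Ioo, mem_insert]
          omega
        have hrec := ih hk1 (by omega)
        rw [hIoo, Finset.sum_insert (by simp), Finset.sum_range_succ]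
        simp only [cutSize_eq_cutEdges] at hrec ⊢
        rw [← hkey, hinter] at hcard
        omega
  have hfin := main p hp le_rfl
  have huniv : cutEdges G Set.univ S = cutEdges G {v | col v ≤ l p} S :=
    cutEdges_congr G S fun v => ⟨fun _ => (hcover v).2, fun _ => trivial⟩
  rw [cutSize_eq_cutEdges G S Set.univ, huniv, ← cutSize_eq_cutEdges]
  exact hfin

end AuxLemmas

/-- Divide and conquer for MaxCut on a U-bubble model: if the light columns
are the columns with indices l 0 < l 1 < ⋯ < l p, covering the model, and T is
a fixed cut of the light columns, then the maximum cut of G agreeing with T on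
the light columns equals the sum over the heavy parts (columns from l (j-1) to
l j) of their maximum cuts agreeing with T on the light columns, minus the cut
sizes inside the middle light columns (each column is a clique, so the cut
inside column C_j has size |S_j|·|C_j \ S_j|). -/
theorem maxcut_heavy_parts_decomposition {V : Type*} [Fintype V]
    (G : SimpleGraph V) (row col : V → ℕ) (qr qs : V → Bool)
    (h : IsUBubbleModel G row col qr qs)
    (p : ℕ) (hp : 0 < p) (l : ℕ → ℕ)
    (hmono : ∀ i j, i < j → j ≤ p → l i < l j)
    (hcover : ∀ v, l 0 ≤ col v ∧ col v ≤ l p)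
    (T : Set V) (hT : T ⊆ {v | ∃ j ≤ p, col v = l j}) :
    mcsOn G Set.univ {v | ∃ j ≤ p, col v = l j} T =
      (∑ j ∈ Finset.range p,
        mcsOn G {v | l j ≤ col v ∧ col v ≤ l (j + 1)}
          {v | ∃ j ≤ p, col v = l j} T) -
      ∑ j ∈ Finset.Ioo 0 p,
        (T ∩ {v | col v = l j}).ncard * ({v | col v = l j} \ T).ncard := by
  classical
  set L : Set V := {v | ∃ j ≤ p, col v = l j} with hLdef
  set Wf : ℕ → Set V := fun j => {v | l j ≤ col v ∧ col v ≤ l (j + 1)} with hWdef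
  have hmono' : ∀ i j, i ≤ j → j ≤ p → l i ≤ l j := by
    intro i j hij hj
    rcases eq_or_lt_of_le hij with rfl | h'
    · exact le_rfl
    · exact (hmono i j h' hj).le
  -- for feasible S, membership in S and T agree on light columns
  have hcolT : ∀ S : Set V, S ∩ L = T ∩ L ∩ Set.univ →
      ∀ j, j ≤ p → ∀ v, col v = l j → (v ∈ S ↔ v ∈ T) := by
    intro S hS j hj v hv
    have hvL : v ∈ L := ⟨j, hj, hv⟩
    constructor
    · intro hvS
      have hx : v ∈ S ∩ L := ⟨hvS, hvL⟩
      rw [hS] at hx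
      exact hx.1.1
    · intro hvT
      have hx : v ∈ T ∩ L ∩ Set.univ := ⟨⟨hvT, hvL⟩, trivial⟩
      rw [← hS] at hx
      exact hx.1
  -- column sizes for feasible cuts
  have hcolsize : ∀ S : Set V, S ∩ L = T ∩ L ∩ Set.univ → ∀ j ∈ Ioo 0 p,
      cutSize G {v | col v = l j} S =
        (T ∩ {v | col v = l j}).ncard * ({v | col v = l j} \ T).ncard := by
    intro S hS j hj
    have hjp : j ≤ p := (mem_Ioo.1 hj).2.le
    have hiff := fun v => hcolT S hS j hjp v
    rw [cutSize_column G row col qr qs h (l j) S]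
    have h1 : S ∩ {v | col v = l j} = T ∩ {v | col v = l j} := by
      ext v
      exact ⟨fun ⟨ha, hb⟩ => ⟨(hiff v hb).1 ha, hb⟩, fun ⟨ha, hb⟩ => ⟨(hiff v hb).2 ha, hb⟩⟩
    have h2 : {v | col v = l j} \ S = {v | col v = l j} \ T := by
      ext v
      exact ⟨fun ⟨ha, hb⟩ => ⟨ha, fun hx => hb ((hiff v ha).2 hx)⟩,
        fun ⟨ha, hb⟩ => ⟨ha, fun hx => hb ((hiff v ha).1 hx)⟩⟩
    rw [h1, h2]
  have key : mcsOn G Set.univ L T +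
      ∑ j ∈ Ioo 0 p, (T ∩ {v | col v = l j}).ncard * ({v | col v = l j} \ T).ncard
      = ∑ j ∈ range p, mcsOn G (Wf j) L T := by
    apply le_antisymm
    · obtain ⟨S, hS1, hS2, hS3⟩ := exists_mcsOn G Set.univ L T
      have hsplit := cutSize_split G S row col qr qs h p hp l hmono hcover
      have hcs := Finset.sum_congr rfl (hcolsize S hS2)
      rw [hS3, ← hcs, hsplit]
      apply Finset.sum_le_sum
      intro j hj
      rw [cutSize_congr G (Wf j) S (S ∩ Wf j)
        (fun v hv => ⟨fun hs => ⟨hs, hv⟩, fun hs => hs.1⟩)]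
      apply le_mcsOn
      · exact Set.inter_subset_right
      · ext v
        constructor
        · rintro ⟨⟨hvS, hvW⟩, hvL⟩
          obtain ⟨k, hk, hcolv⟩ := hvL
          exact ⟨⟨(hcolT S hS2 k hk v hcolv).1 hvS, ⟨k, hk, hcolv⟩⟩, hvW⟩
        · rintro ⟨⟨hvT, hvL⟩, hvW⟩
          obtain ⟨k, hk, hcolv⟩ := hvL
          exact ⟨⟨(hcolT S hS2 k hk v hcolv).2 hvT, hvW⟩, ⟨k, hk, hcolv⟩⟩
    · choose Sf hSf1 hSf2 hSf3 using fun j => exists_mcsOn G (Wf j) L T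
      set S : Set V := ⋃ j ∈ range p, Sf j with hSdef
      have hmemS : ∀ v : V, v ∈ S ↔ ∃ j, j < p ∧ v ∈ Sf j := by
        intro v
        rw [hSdef]
        simp only [Set.mem_iUnion, mem_range, exists_prop]
      have hSL : S ∩ L = T ∩ L ∩ Set.univ := by
        ext v
        constructor
        · rintro ⟨hvS, hvL⟩
          obtain ⟨j, hj, hvSf⟩ := (hmemS v).1 hvS
          have hx : v ∈ Sf j ∩ L := ⟨hvSf, hvL⟩
          rw [hSf2 j] at hx
          exact ⟨⟨hx.1.1, hvL⟩, trivial⟩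
        · rintro ⟨⟨hvT, hvL⟩, -⟩
          obtain ⟨k, hk, hcolv⟩ := hvL
          refine ⟨?_, ⟨k, hk, hcolv⟩⟩
          by_cases hkp : k < p
          · have hvW : v ∈ Wf k := by
              have := (hmono k (k + 1) (lt_add_one k) (by omega)).le
              exact ⟨le_of_eq hcolv.symm, by omega⟩
            have hx : v ∈ T ∩ L ∩ Wf k := ⟨⟨hvT, ⟨k, hk, hcolv⟩⟩, hvW⟩
            rw [← hSf2 k] at hx
            exact (hmemS v).2 ⟨k, hkp, hx.1⟩
          · have hkp' : k = p := by omega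
            rw [hkp'] at hcolv
            have hE : p - 1 + 1 = p := by omega
            have hvW : v ∈ Wf (p - 1) := by
              refine ⟨?_, ?_⟩
              · have := (hmono (p - 1) p (by omega) le_rfl).le
                omega
              · rw [hE]
                omega
            have hx : v ∈ T ∩ L ∩ Wf (p - 1) := ⟨⟨hvT, ⟨p, le_rfl, hcolv⟩⟩, hvW⟩
            rw [← hSf2 (p - 1)] at hx
            exact (hmemS v).2 ⟨p - 1, by omega, hx.1⟩
      have hSW : ∀ j, j < p → S ∩ Wf j = Sf j := by
        intro j hjp
        ext v
        constructor
        · rintro ⟨hvS, hvW⟩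
          obtain ⟨k, hkp, hvSf⟩ := (hmemS v).1 hvS
          rcases Nat.lt_trichotomy k j with hlt | rfl | hgt
          · have hvWk : v ∈ Wf k := hSf1 k hvSf
            have h1 : l (k + 1) ≤ l j := hmono' (k + 1) j (by omega) (by omega)
            have hcolv : col v = l j := le_antisymm (le_trans hvWk.2 h1) hvW.1
            have hvL : v ∈ L := ⟨j, by omega, hcolv⟩
            have hx : v ∈ Sf k ∩ L := ⟨hvSf, hvL⟩
            rw [hSf2 k] at hx
            have hy : v ∈ T ∩ L ∩ Wf j := ⟨hx.1, hvW⟩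
            rw [← hSf2 j] at hy
            exact hy.1
          · exact hvSf
          · have hvWk : v ∈ Wf k := hSf1 k hvSf
            have h1 : l (j + 1) ≤ l k := hmono' (j + 1) k (by omega) (by omega)
            have hcolv : col v = l (j + 1) := le_antisymm hvW.2 (le_trans h1 hvWk.1)
            have hvL : v ∈ L := ⟨j + 1, by omega, hcolv⟩
            have hx : v ∈ Sf k ∩ L := ⟨hvSf, hvL⟩
            rw [hSf2 k] at hx
            have hy : v ∈ T ∩ L ∩ Wf j := ⟨hx.1, hvW⟩
            rw [← hSf2 j] at hy
            exact hy.1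
        · intro hvSf
          exact ⟨(hmemS v).2 ⟨j, hjp, hvSf⟩, hSf1 j hvSf⟩
      have hsplit := cutSize_split G S row col qr qs h p hp l hmono hcover
      have hcs := Finset.sum_congr rfl (hcolsize S hSL)
      have hterm : ∀ j ∈ range p, mcsOn G (Wf j) L T = cutSize G (Wf j) S := by
        intro j hj
        rw [hSf3 j]
        apply cutSize_congr
        intro v hv
        constructor
        · intro hx
          have : v ∈ S ∩ Wf j := by rw [hSW j (mem_range.1 hj)]; exact hx
          exact this.1
        · intro hx
          have : v ∈ S ∩ Wf j := ⟨hx, hv⟩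
          rw [hSW j (mem_range.1 hj)] at this
          exact this
      rw [Finset.sum_congr rfl hterm, ← hsplit, ← hcs]
      have hle := le_mcsOn G Set.univ L T S (Set.subset_univ S) hSL
      omega
  have keyg : mcsOn G Set.univ L T +
      ∑ j ∈ Ioo 0 p, (T ∩ {v | col v = l j}).ncard * ({v | col v = l j} \ T).ncard
      = ∑ j ∈ range p, mcsOn G {v | l j ≤ col v ∧ col v ≤ l (j + 1)} L T := key
  omega
end
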